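/- Let f : 𝒳ⁿ → ℝ satisfy the self-bounding condition Σ_{k=1}^n (f(x) − inf_{y∈𝒳} f(S_y^k x))² ≤ a·f(x) for all x ∈ 𝒳ⁿ and some a > 0. Then for all λ ∈ (0, 2/a) and X ~ μⁿ i.i.d., ln E[exp(λ(f(X) − E[f(X')]))] ≤ λ²a·E[f(X)]/(2 − aλ). -/

import Mathlib

open MeasureTheory Real Filter Set Topology

namespace SBaux

/-! ### Elementary real inequalities -/

lemma mul_log_lb {s t : ℝ} (hs : 0 ≤ s) (ht : 0 < t) :
    s - t ≤ s * Real.log s - s * Real.log t := by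
  rcases eq_or_lt_of_le hs with h | hs
  · simp [← h]; positivity
  · have h1 : Real.log (t / s) ≤ t / s - 1 := Real.log_le_sub_one_of_pos (by positivity)
    have h2 : Real.log (t / s) = Real.log t - Real.log s := Real.log_div (ne_of_gt ht) (ne_of_gt hs)
    have h3 := mul_le_mul_of_nonneg_left h1 hs.le
    have h4 : s * (t / s) = t := by field_simp
    rw [h2] at h3
    nlinarith [h3, h4]

lemma young_ineq {s : ℝ} (t : ℝ) (hs : 0 ≤ s) :
    s * t ≤ s * Real.log s - s + Real.exp t := by
  rcases eq_or_lt_of_le hs with h | hs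
  · simp [← h]; positivity
  · have h1 : (t - Real.log s) + 1 ≤ Real.exp (t - Real.log s) := Real.add_one_le_exp _
    have h2 : Real.exp (t - Real.log s) = Real.exp t / s := by
      rw [Real.exp_sub, Real.exp_log hs]
    have := mul_le_mul_of_nonneg_left h1 hs.le
    rw [h2, mul_div_cancel₀ _ (ne_of_gt hs)] at this
    nlinarith

lemma exp_neg_sub_bound {s : ℝ} (hs : 0 ≤ s) : Real.exp (-s) - 1 + s ≤ s ^ 2 / 2 := by
  have key : ∀ x : ℝ, 0 ≤ x → Real.exp (-x) - 1 + x - x ^ 2 / 2 ≤ 0 := by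
    intro x hx
    have hmono : AntitoneOn (fun y : ℝ => Real.exp (-y) - 1 + y - y ^ 2 / 2) (Ici (0:ℝ)) := by
      have hderiv : ∀ y : ℝ, HasDerivAt (fun y : ℝ => Real.exp (-y) - 1 + y - y ^ 2 / 2)
          (-Real.exp (-y) + 1 - y) y := by
        intro y
        have h1 : HasDerivAt (fun y : ℝ => Real.exp (-y)) (-Real.exp (-y)) y := by
          simpa [Function.comp_def] using (Real.hasDerivAt_exp (-y)).comp y ((hasDerivAt_id y).neg)
        have h2 : HasDerivAt (fun y : ℝ => y ^ 2 / 2) y y := by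
          simpa using ((hasDerivAt_pow 2 y).div_const 2)
        simpa [sub_eq_add_neg] using ((h1.sub_const 1).fun_add (hasDerivAt_id' y)).fun_sub h2
      apply antitoneOn_of_deriv_nonpos (convex_Ici 0)
      · exact (Continuous.continuousOn (by fun_prop))
      · intro y _
        exact (hderiv y).differentiableAt.differentiableWithinAt
      · intro y hy
        rw [interior_Ici] at hy
        rw [(hderiv y).deriv]
        have : 1 - y ≤ Real.exp (-y) := by
          have := Real.add_one_le_exp (-y); linarith
        linarith
    have h0 := hmono (self_mem_Ici) (show x ∈ Ici (0:ℝ) from hx) hx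
    simpa using h0
  linarith [key s hs]


lemma mul_exp_neg_le {δ s : ℝ} (hδ : 0 < δ) (hs : 0 ≤ s) :
    s * Real.exp (-δ * s) ≤ 1 / δ := by
  have h1 : δ * s ≤ Real.exp (δ * s) := by
    have := Real.add_one_le_exp (δ * s); linarith
  have h2 : Real.exp (δ * s) * Real.exp (-δ * s) = 1 := by
    rw [← Real.exp_add]; ring_nf; exact Real.exp_zero
  have h3 := mul_le_mul_of_nonneg_right h1 (Real.exp_pos (-δ * s)).le
  rw [h2] at h3
  rw [le_div_iff₀ hδ]
  nlinarith

lemma sq_mul_exp_neg_le {δ s : ℝ} (hδ : 0 < δ) (hs : 0 ≤ s) :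
    s ^ 2 * Real.exp (-δ * s) ≤ 4 / δ ^ 2 := by
  have h1 : 1 + δ * s / 2 ≤ Real.exp (δ * s / 2) := by
    have := Real.add_one_le_exp (δ * s / 2); linarith
  have h2 : (δ * s / 2) ^ 2 ≤ Real.exp (δ * s) := by
    have hb : (0:ℝ) ≤ 1 + δ * s / 2 := by positivity
    calc (δ * s / 2) ^ 2 ≤ (1 + δ * s / 2) ^ 2 := by nlinarith [mul_nonneg hδ.le hs]
    _ ≤ (Real.exp (δ * s / 2)) ^ 2 := by
        apply pow_le_pow_left₀ hb h1
    _ = Real.exp (δ * s / 2 + δ * s / 2) := by rw [Real.exp_add]; ring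
    _ = Real.exp (δ * s) := by ring_nf
  have h3 : Real.exp (δ * s) * Real.exp (-δ * s) = 1 := by
    rw [← Real.exp_add]; ring_nf; exact Real.exp_zero
  have h4 := mul_le_mul_of_nonneg_right h2 (Real.exp_pos (-δ * s)).le
  rw [h3] at h4
  have h5 : (0:ℝ) < δ ^ 2 := by positivity
  rw [le_div_iff₀ h5]
  nlinarith [h4]

lemma exp_sub_one_le {x : ℝ} (hx : 0 ≤ x) : Real.exp x - 1 ≤ x * Real.exp x := by
  have h := Real.add_one_le_exp (-x)
  have h2 : Real.exp (-x) = (Real.exp x)⁻¹ := Real.exp_neg x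
  have hpos : (0:ℝ) < Real.exp x := Real.exp_pos x
  rw [h2] at h
  have := mul_le_mul_of_nonneg_right h hpos.le
  rw [add_mul, inv_mul_cancel₀ (ne_of_gt hpos)] at this
  nlinarith


/-! ### A measurable essential infimum -/

section EInf

variable {Ω : Type*} [MeasurableSpace Ω] (ρ : Measure Ω) [IsProbabilityMeasure ρ]

noncomputable def aeInf (g : Ω → ℝ) : ℝ := sSup {c : ℝ | ∀ᵐ ω ∂ρ, c ≤ g ω}

lemma aeInf_set_bddAbove (g : Ω → ℝ) : BddAbove {c : ℝ | ∀ᵐ ω ∂ρ, c ≤ g ω} := by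
  by_contra h
  have hS : ∀ n : ℕ, ∀ᵐ ω ∂ρ, (n:ℝ) ≤ g ω := by
    intro n
    rcases not_bddAbove_iff.1 h (n:ℝ) with ⟨c, hc, hlt⟩
    have hc' : ∀ᵐ ω ∂ρ, c ≤ g ω := hc
    exact hc'.mono (fun ω hω => le_trans hlt.le hω)
  have hall : ∀ᵐ ω ∂ρ, ∀ n : ℕ, (n:ℝ) ≤ g ω := ae_all_iff.2 hS
  have hne : (ae ρ).NeBot := ae_neBot.2 (IsProbabilityMeasure.ne_zero ρ)
  obtain ⟨ω, hω⟩ := hall.exists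
  rcases exists_nat_gt (g ω) with ⟨n, hn⟩
  exact absurd (hω n) (not_le.2 hn)

lemma le_aeInf {g : Ω → ℝ} {z : ℝ} (hz : ∀ᵐ ω ∂ρ, z ≤ g ω) : z ≤ aeInf ρ g :=
  le_csSup (aeInf_set_bddAbove ρ g) hz

lemma aeInf_ae_le {g : Ω → ℝ} (h0 : ∀ᵐ ω ∂ρ, 0 ≤ g ω) : ∀ᵐ ω ∂ρ, aeInf ρ g ≤ g ω := by
  have key : ∀ q : ℚ, (q:ℝ) < aeInf ρ g → ∀ᵐ ω ∂ρ, (q:ℝ) ≤ g ω := by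
    intro q hq
    obtain ⟨c, hc, hqc⟩ :=
      exists_lt_of_lt_csSup (s := {c : ℝ | ∀ᵐ ω ∂ρ, c ≤ g ω}) ⟨0, h0⟩ hq
    have hc' : ∀ᵐ ω ∂ρ, c ≤ g ω := hc
    exact hc'.mono fun ω h => hqc.le.trans h
  have hall : ∀ᵐ ω ∂ρ, ∀ q : ℚ, (q:ℝ) < aeInf ρ g → (q:ℝ) ≤ g ω := by
    rw [ae_all_iff]; intro q
    by_cases hq : (q:ℝ) < aeInf ρ g
    · exact (key q hq).mono (fun ω h _ => h)
    · filter_upwards with ω h; exact absurd h hq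
  filter_upwards [hall] with ω hω
  by_contra hlt
  push_neg at hlt
  obtain ⟨q, hq1, hq2⟩ := exists_rat_btwn hlt
  exact absurd (hω q hq2) (not_le.2 hq1)

lemma measurable_aeInf_comp {α : Type*} [MeasurableSpace α] {F : α × Ω → ℝ}
    (hF : Measurable F) (h0 : ∀ p, 0 ≤ F p) :
    Measurable fun x => aeInf ρ (fun ω => F (x, ω)) := by
  apply measurable_of_Iio
  intro c
  have hzero : ∀ x, (0:ℝ) ∈ {c : ℝ | ∀ᵐ ω ∂ρ, c ≤ F (x, ω)} := by
    intro x; exact ae_of_all _ (fun ω => h0 (x, ω))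
  have hmeasq : ∀ q : ℚ, Measurable fun x => ρ {ω | F (x, ω) < (q:ℝ)} := by
    intro q
    have hA : MeasurableSet {p : α × Ω | F p < (q:ℝ)} := measurableSet_lt hF measurable_const
    exact measurable_measure_prodMk_left hA
  have hset : (fun x => aeInf ρ (fun ω => F (x, ω))) ⁻¹' Iio c =
      ⋃ q : {q : ℚ // (q:ℝ) < c}, {x | 0 < ρ {ω | F (x, ω) < ((q:ℚ):ℝ)}} := by
    ext x
    simp only [mem_preimage, mem_Iio, mem_iUnion, mem_setOf_eq]
    constructor
    · intro hx
      obtain ⟨q, hq1, hq2⟩ := exists_rat_btwn hx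
      refine ⟨⟨q, hq2⟩, ?_⟩
      by_contra hz
      push_neg at hz
      have hz0 : ρ {ω | F (x, ω) < (q:ℝ)} = 0 := le_antisymm hz zero_le
      have : ∀ᵐ ω ∂ρ, (q:ℝ) ≤ F (x, ω) := by
        rw [ae_iff]
        convert hz0 using 2
        ext ω; simp [not_le]
      have := le_aeInf ρ this
      exact absurd hq1 (not_lt.2 this)
    · rintro ⟨⟨q, hqc⟩, hq⟩
      have hnotin : ¬ (∀ᵐ ω ∂ρ, (q:ℝ) ≤ F (x, ω)) := by
        intro hae
        rw [ae_iff] at hae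
        have : {a | ¬(q:ℝ) ≤ F (x, a)} = {ω | F (x, ω) < (q:ℝ)} := by
          ext ω; simp [not_le]
        rw [this] at hae
        exact absurd hq (by rw [hae]; exact lt_irrefl 0)
      have hle : aeInf ρ (fun ω => F (x, ω)) ≤ (q:ℝ) := by
        apply csSup_le ⟨0, hzero x⟩
        intro s hs
        by_contra hsq
        push_neg at hsq
        have hs' : ∀ᵐ ω ∂ρ, s ≤ F (x, ω) := hs
        exact hnotin (hs'.mono (fun ω h => hsq.le.trans h))
      exact lt_of_le_of_lt hle hqc
  rw [hset]
  apply MeasurableSet.iUnion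
  intro q
  exact measurableSet_lt measurable_const (hmeasq q)

end EInf

/-! ### Entropy -/

section Ent

variable {Ω : Type*} [MeasurableSpace Ω]

noncomputable def ent (ρ : Measure Ω) (u : Ω → ℝ) : ℝ :=
  (∫ ω, u ω * Real.log (u ω) ∂ρ) - (∫ ω, u ω ∂ρ) * Real.log (∫ ω, u ω ∂ρ)

variable {ρ : Measure Ω} [IsProbabilityMeasure ρ]

lemma one_le_integral {u : Ω → ℝ} (hu1 : ∀ᵐ ω ∂ρ, 1 ≤ u ω) (hui : Integrable u ρ) :
    1 ≤ ∫ ω, u ω ∂ρ := by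
  have : ∫ ω, (1:ℝ) ∂ρ ≤ ∫ ω, u ω ∂ρ :=
    integral_mono_ae (integrable_const 1) hui hu1
  simpa using this

lemma ent_nonneg {u : Ω → ℝ} (hu1 : ∀ᵐ ω ∂ρ, 1 ≤ u ω) (hui : Integrable u ρ)
    (huli : Integrable (fun ω => u ω * Real.log (u ω)) ρ) : 0 ≤ ent ρ u := by
  set m := ∫ ω, u ω ∂ρ with hm
  have hm1 : 1 ≤ m := one_le_integral hu1 hui
  have hm0 : 0 < m := lt_of_lt_of_le one_pos hm1
  have hptwise : ∀ᵐ ω ∂ρ, u ω - m ≤ u ω * Real.log (u ω) - u ω * Real.log m :=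
    hu1.mono fun ω h1 => mul_log_lb (le_trans zero_le_one h1) hm0
  have hint : ∫ ω, (u ω - m) ∂ρ ≤ ∫ ω, (u ω * Real.log (u ω) - u ω * Real.log m) ∂ρ := by
    apply integral_mono_ae (hui.sub (integrable_const m)) (huli.sub (hui.mul_const _)) hptwise
  rw [integral_sub hui (integrable_const m), integral_sub huli (hui.mul_const _),
    integral_const, integral_mul_const] at hint
  simp only [measure_univ, probReal_univ, ENNReal.toReal_one, smul_eq_mul, one_mul] at hint
  unfold ent
  rw [← hm]
  nlinarith [hint]

lemma integral_mul_le_ent {u h : Ω → ℝ} (hu1 : ∀ᵐ ω ∂ρ, 1 ≤ u ω) (hui : Integrable u ρ)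
    (huli : Integrable (fun ω => u ω * Real.log (u ω)) ρ)
    (hm : Measurable h)
    (hh : Integrable (fun ω => u ω * h ω) ρ)
    (hexp : Integrable (fun ω => Real.exp (h ω)) ρ)
    (hexp1 : ∫ ω, Real.exp (h ω) ∂ρ ≤ 1) :
    ∫ ω, u ω * h ω ∂ρ ≤ ent ρ u := by
  set m := ∫ ω, u ω ∂ρ with hmdef
  have hm1 : 1 ≤ m := one_le_integral hu1 hui
  have hm0 : 0 < m := lt_of_lt_of_le one_pos hm1
  have hptwise : ∀ᵐ ω ∂ρ,
      u ω * h ω ≤ (u ω * Real.log (u ω) - u ω * Real.log m) - u ω + m * Real.exp (h ω) := by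
    filter_upwards [hu1] with ω h1
    have hu0 : 0 < u ω := lt_of_lt_of_le one_pos h1
    have hy := young_ineq (s := u ω / m) (h ω) (by positivity)
    have hlog : Real.log (u ω / m) = Real.log (u ω) - Real.log m :=
      Real.log_div (ne_of_gt hu0) (ne_of_gt hm0)
    rw [hlog] at hy
    have := mul_le_mul_of_nonneg_left hy hm0.le
    have hmm : m * (u ω / m) = u ω := by field_simp
    calc u ω * h ω = m * (u ω / m * h ω) := by field_simp
    _ ≤ m * (u ω / m * (Real.log (u ω) - Real.log m) - u ω / m + Real.exp (h ω)) := this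
    _ = (u ω * Real.log (u ω) - u ω * Real.log m) - u ω + m * Real.exp (h ω) := by
        field_simp
  have hint1 : Integrable (fun ω => u ω * Real.log (u ω) - u ω * Real.log m - u ω) ρ := by
    exact (huli.sub (hui.mul_const _)).sub hui
  have hint2 : Integrable (fun ω => m * Real.exp (h ω)) ρ := hexp.const_mul m
  have hrhs : Integrable (fun ω =>
      (u ω * Real.log (u ω) - u ω * Real.log m) - u ω + m * Real.exp (h ω)) ρ := by
    exact hint1.add hint2
  have hint := integral_mono_ae hh hrhs hptwise
  have e1 : ∫ ω, ((u ω * Real.log (u ω) - u ω * Real.log m) - u ω + m * Real.exp (h ω)) ∂ρ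
      = ((∫ ω, u ω * Real.log (u ω) ∂ρ) - m * Real.log m - m) + m * ∫ ω, Real.exp (h ω) ∂ρ := by
    rw [integral_add hint1 hint2,
      integral_sub (by exact huli.sub (hui.mul_const _)) hui,
      integral_sub huli (by exact hui.mul_const _),
      integral_mul_const, integral_const_mul, ← hmdef]
  rw [e1] at hint
  unfold ent
  rw [← hmdef]
  nlinarith [hint, mul_le_mul_of_nonneg_left hexp1 hm0.le]


lemma ent_exp_le {g : Ω → ℝ} {t z : ℝ}
    (ht : 0 < t) (hzg : ∀ᵐ ω ∂ρ, z ≤ g ω) (hg0 : ∀ᵐ ω ∂ρ, 0 ≤ g ω)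
    (h1 : Integrable (fun ω => Real.exp (t * g ω)) ρ)
    (h2 : Integrable (fun ω => g ω * Real.exp (t * g ω)) ρ)
    (h3 : Integrable (fun ω => g ω ^ 2 * Real.exp (t * g ω)) ρ) :
    ent ρ (fun ω => Real.exp (t * g ω))
      ≤ t ^ 2 / 2 * ∫ ω, (g ω - z) ^ 2 * Real.exp (t * g ω) ∂ρ := by
  set c := Real.exp (t * z) with hcdef
  have hc0 : 0 < c := Real.exp_pos _
  set m := ∫ ω, Real.exp (t * g ω) ∂ρ with hmdef
  have hm0 : 0 < m := by
    have hae : ∀ᵐ ω ∂ρ, 1 ≤ Real.exp (t * g ω) := hg0.mono fun ω h => by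
      rw [← Real.exp_zero]; exact Real.exp_le_exp.2 (by positivity)
    exact lt_of_lt_of_le one_pos (one_le_integral hae h1)
  set D := ∫ ω, g ω * Real.exp (t * g ω) ∂ρ with hDdef
  have hentform : ent ρ (fun ω => Real.exp (t * g ω)) = t * D - m * Real.log m := by
    unfold ent
    rw [← hmdef]
    congr 1
    have : ∀ ω, Real.exp (t * g ω) * Real.log (Real.exp (t * g ω))
        = t * (g ω * Real.exp (t * g ω)) := by
      intro ω; rw [Real.log_exp]; ring
    simp_rw [this]
    rw [integral_const_mul, hDdef]
  have hstep1 : m - c ≤ m * Real.log m - m * Real.log c := mul_log_lb hm0.le hc0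
  have hlogc : Real.log c = t * z := Real.log_exp _
  have hLHSint : Integrable (fun ω =>
      t * (g ω * Real.exp (t * g ω)) - t * z * Real.exp (t * g ω)
        - Real.exp (t * g ω) + c) ρ := by
    exact (((h2.const_mul t).sub (h1.const_mul (t*z))).sub h1).add (integrable_const c)
  have hsqint : Integrable (fun ω => (g ω - z) ^ 2 * Real.exp (t * g ω)) ρ := by
    have hfun : (fun ω => (g ω - z) ^ 2 * Real.exp (t * g ω))
        = fun ω => g ω ^ 2 * Real.exp (t * g ω) - 2 * z * (g ω * Real.exp (t * g ω))
          + z ^ 2 * Real.exp (t * g ω) := funext fun ω => by ring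
    rw [hfun]
    exact (h3.sub (h2.const_mul (2*z))).add (h1.const_mul (z^2))
  have hRHSint : Integrable (fun ω => t ^ 2 / 2 * ((g ω - z) ^ 2 * Real.exp (t * g ω))) ρ :=
    hsqint.const_mul _
  have hptwise : ∀ᵐ ω ∂ρ,
      t * (g ω * Real.exp (t * g ω)) - t * z * Real.exp (t * g ω) - Real.exp (t * g ω) + c
        ≤ t ^ 2 / 2 * ((g ω - z) ^ 2 * Real.exp (t * g ω)) := by
    filter_upwards [hzg] with ω hzω
    set s := t * (g ω - z) with hsdef
    have hs0 : 0 ≤ s := mul_nonneg ht.le (by linarith)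
    have hYc : c = Real.exp (t * g ω) * Real.exp (-s) := by
      rw [hcdef, ← Real.exp_add]; congr 1; rw [hsdef]; ring
    calc t * (g ω * Real.exp (t * g ω)) - t * z * Real.exp (t * g ω) - Real.exp (t * g ω) + c
        = Real.exp (t * g ω) * (Real.exp (-s) - 1 + s) := by rw [hYc, hsdef]; ring
    _ ≤ Real.exp (t * g ω) * (s ^ 2 / 2) :=
        mul_le_mul_of_nonneg_left (exp_neg_sub_bound hs0) (Real.exp_pos _).le
    _ = t ^ 2 / 2 * ((g ω - z) ^ 2 * Real.exp (t * g ω)) := by rw [hsdef]; ring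
  have hint := integral_mono_ae hLHSint hRHSint hptwise
  have heval : ∫ ω, (t * (g ω * Real.exp (t * g ω)) - t * z * Real.exp (t * g ω)
      - Real.exp (t * g ω) + c) ∂ρ = t * D - t * z * m - m + c := by
    rw [integral_add (by exact ((h2.const_mul t).sub (h1.const_mul (t*z))).sub h1)
      (integrable_const c),
      integral_sub (by exact (h2.const_mul t).sub (h1.const_mul (t*z))) h1,
      integral_sub (by exact h2.const_mul t) (by exact h1.const_mul (t*z)),
      integral_const_mul, integral_const_mul, integral_const]
    simp [← hmdef, ← hDdef]
  have heval2 : ∫ ω, t ^ 2 / 2 * ((g ω - z) ^ 2 * Real.exp (t * g ω)) ∂ρ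
      = t ^ 2 / 2 * ∫ ω, (g ω - z) ^ 2 * Real.exp (t * g ω) ∂ρ := integral_const_mul _ _
  rw [heval, heval2] at hint
  rw [hentform]
  nlinarith [hstep1, hint, hlogc]

end Ent


/-! ### Product measure infrastructure -/

section ProdInfra

lemma mp_snd {α β : Type*} [MeasurableSpace α] [MeasurableSpace β] (P : Measure α)
    (ρ : Measure β) [IsProbabilityMeasure P] [SFinite ρ] :
    MeasurePreserving Prod.snd (P.prod ρ) ρ :=
  ⟨measurable_snd, by simp⟩

lemma integral_snd_prod {α β : Type*} [MeasurableSpace α] [MeasurableSpace β]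
    (P : Measure α) (ρ : Measure β) [IsProbabilityMeasure P] [SFinite ρ]
    {F : β → ℝ} (hF : AEStronglyMeasurable F ρ) :
    ∫ p, F p.2 ∂(P.prod ρ) = ∫ w, F w ∂ρ := by
  have h := mp_snd P ρ
  have h2 : AEStronglyMeasurable F (Measure.map Prod.snd (P.prod ρ)) := by
    rw [h.map_eq]; exact hF
  have h3 := integral_map (μ := P.prod ρ) measurable_snd.aemeasurable h2
  rw [h.map_eq] at h3
  exact h3.symm

variable {𝒳 : Type*} [MeasurableSpace 𝒳] (μ : Measure 𝒳) [IsProbabilityMeasure μ]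

noncomputable abbrev piM (n : ℕ) : Measure (Fin n → 𝒳) := Measure.pi (fun _ : Fin n => μ)

lemma mp_insertNth (n : ℕ) (k : Fin (n+1)) :
    MeasurePreserving (fun p : 𝒳 × (Fin n → 𝒳) => Fin.insertNth k p.1 p.2)
      (μ.prod (piM μ n)) (piM μ (n+1)) := by
  have h := (measurePreserving_piFinSuccAbove (fun _ : Fin (n+1) => μ) k).symm
  have hfun : ⇑(MeasurableEquiv.piFinSuccAbove (fun _ : Fin (n+1) => 𝒳) k).symm
      = fun p : 𝒳 × (Fin n → 𝒳) => Fin.insertNth k p.1 p.2 := by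
    funext p
    rfl
  rw [hfun] at h
  exact h

lemma mp_cons (n : ℕ) :
    MeasurePreserving (fun p : 𝒳 × (Fin n → 𝒳) => Fin.cons p.1 p.2)
      (μ.prod (piM μ n)) (piM μ (n+1)) := by
  have h := mp_insertNth μ n 0
  have hfun : (fun p : 𝒳 × (Fin n → 𝒳) => Fin.insertNth 0 p.1 p.2)
      = fun p : 𝒳 × (Fin n → 𝒳) => (Fin.cons p.1 p.2 : Fin (n+1) → 𝒳) := by
    funext p
    exact Fin.insertNth_zero' p.1 p.2
  rwa [hfun] at h

lemma mp_update (n : ℕ) (k : Fin n) :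
    MeasurePreserving (fun p : (Fin n → 𝒳) × 𝒳 => Function.update p.1 k p.2)
      ((piM μ n).prod μ) (piM μ n) := by
  cases n with
  | zero => exact k.elim0
  | succ m =>
    have e1 : MeasurePreserving
        (Prod.map (⇑(MeasurableEquiv.piFinSuccAbove (fun _ : Fin (m+1) => 𝒳) k)) (id : 𝒳 → 𝒳))
        ((piM μ (m+1)).prod μ) ((μ.prod (piM μ m)).prod μ) :=
      (measurePreserving_piFinSuccAbove (fun _ : Fin (m+1) => μ) k).prod (MeasurePreserving.id μ)
    have e2 : MeasurePreserving (fun q : (𝒳 × (Fin m → 𝒳)) × 𝒳 => (q.2, q.1.2))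
        ((μ.prod (piM μ m)).prod μ) (μ.prod (piM μ m)) := by
      have h1 : MeasurePreserving Prod.swap ((μ.prod (piM μ m)).prod μ)
          (μ.prod ((μ.prod (piM μ m)))) := Measure.measurePreserving_swap
      have h2 : MeasurePreserving
          (Prod.map (id : 𝒳 → 𝒳) (Prod.snd : 𝒳 × (Fin m → 𝒳) → (Fin m → 𝒳)))
          (μ.prod (μ.prod (piM μ m))) (μ.prod (piM μ m)) :=
        (MeasurePreserving.id μ).prod (mp_snd μ (piM μ m))
      exact h2.comp h1
    have e3 := (mp_insertNth μ m k).comp (e2.comp e1)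
    have hfun : ((fun p : 𝒳 × (Fin m → 𝒳) => Fin.insertNth k p.1 p.2) ∘
        ((fun q : (𝒳 × (Fin m → 𝒳)) × 𝒳 => (q.2, q.1.2)) ∘
          (Prod.map (⇑(MeasurableEquiv.piFinSuccAbove (fun _ : Fin (m+1) => 𝒳) k)) (id : 𝒳 → 𝒳))))
        = fun p : (Fin (m+1) → 𝒳) × 𝒳 => Function.update p.1 k p.2 := by
      funext p
      show Fin.insertNth k p.2 (Fin.removeNth k p.1) = Function.update p.1 k p.2
      exact Fin.insertNth_removeNth k p.2 p.1
    rwa [hfun] at e3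

lemma mp_consUpd (n : ℕ) (k : Fin n) :
    MeasurePreserving (fun q : (𝒳 × 𝒳) × (Fin n → 𝒳) =>
        (Fin.cons q.1.1 (Function.update q.2 k q.1.2) : Fin (n+1) → 𝒳))
      ((μ.prod μ).prod (piM μ n)) (piM μ (n+1)) := by
  have hA : MeasurePreserving (⇑(MeasurableEquiv.prodAssoc : (𝒳 × 𝒳) × (Fin n → 𝒳) ≃ᵐ 𝒳 × (𝒳 × (Fin n → 𝒳))))
      ((μ.prod μ).prod (piM μ n)) (μ.prod (μ.prod (piM μ n))) :=
    ⟨MeasurableEquiv.prodAssoc.measurable, Measure.prodAssoc_prod⟩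
  have hB : MeasurePreserving (Prod.map (id : 𝒳 → 𝒳) (Prod.swap : 𝒳 × (Fin n → 𝒳) → (Fin n → 𝒳) × 𝒳))
      (μ.prod (μ.prod (piM μ n))) (μ.prod ((piM μ n).prod μ)) :=
    (MeasurePreserving.id μ).prod Measure.measurePreserving_swap
  have hC : MeasurePreserving
      (Prod.map (id : 𝒳 → 𝒳) (fun p : (Fin n → 𝒳) × 𝒳 => Function.update p.1 k p.2))
      (μ.prod ((piM μ n).prod μ)) (μ.prod (piM μ n)) :=
    (MeasurePreserving.id μ).prod (mp_update μ n k)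
  have e := (mp_cons μ n).comp (hC.comp (hB.comp hA))
  have hfun : ((fun p : 𝒳 × (Fin n → 𝒳) => Fin.cons p.1 p.2) ∘
      ((Prod.map (id : 𝒳 → 𝒳) (fun p : (Fin n → 𝒳) × 𝒳 => Function.update p.1 k p.2)) ∘
        ((Prod.map (id : 𝒳 → 𝒳) (Prod.swap : 𝒳 × (Fin n → 𝒳) → (Fin n → 𝒳) × 𝒳)) ∘
          (⇑(MeasurableEquiv.prodAssoc : (𝒳 × 𝒳) × (Fin n → 𝒳) ≃ᵐ 𝒳 × (𝒳 × (Fin n → 𝒳)))))))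
      = fun q : (𝒳 × 𝒳) × (Fin n → 𝒳) =>
        (Fin.cons q.1.1 (Function.update q.2 k q.1.2) : Fin (n+1) → 𝒳) := by
    funext q
    rfl
  rwa [hfun] at e

end ProdInfra


/-! ### Mixing: entropy of a mixture is at most the mixture of entropies -/

section Mixing

variable {A Ω : Type*} [MeasurableSpace A] [MeasurableSpace Ω]
variable {P : Measure A} [IsProbabilityMeasure P] {ρ : Measure Ω} [IsProbabilityMeasure ρ]
variable {u : A × Ω → ℝ}

lemma ae_snd_prod {Q : Ω → Prop} (hQ : ∀ᵐ ω ∂ρ, Q ω) : ∀ᵐ p ∂P.prod ρ, Q p.2 :=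
  ((mp_snd P ρ).quasiMeasurePreserving.tendsto_ae).eventually hQ

lemma ae_swap_prod {Q : A × Ω → Prop} (hQ : ∀ᵐ p ∂P.prod ρ, Q p) :
    ∀ᵐ q ∂ρ.prod P, Q (q.2, q.1) :=
  ((Measure.measurePreserving_swap).quasiMeasurePreserving.tendsto_ae).eventually hQ

lemma mix_v_meas (hu : Measurable u) : Measurable (fun ω => ∫ θ, u (θ, ω) ∂P) :=
  (hu.stronglyMeasurable.integral_prod_left').measurable

lemma mix_v_one (hu1 : ∀ᵐ p ∂P.prod ρ, 1 ≤ u p) (hui : Integrable u (P.prod ρ)) :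
    ∀ᵐ ω ∂ρ, 1 ≤ ∫ θ, u (θ, ω) ∂P := by
  have h1 : ∀ᵐ ω ∂ρ, ∀ᵐ θ ∂P, 1 ≤ u (θ, ω) :=
    Measure.ae_ae_of_ae_prod (ae_swap_prod hu1)
  filter_upwards [h1, hui.prod_left_ae] with ω hω hint
  exact one_le_integral hω hint

lemma mix_vlogv_bound (hu : Measurable u) (hu1 : ∀ᵐ p ∂P.prod ρ, 1 ≤ u p)
    (hui : Integrable u (P.prod ρ))
    (huli : Integrable (fun p => u p * Real.log (u p)) (P.prod ρ)) :
    ∀ᵐ ω ∂ρ, (∫ θ, u (θ, ω) ∂P) * Real.log (∫ θ, u (θ, ω) ∂P)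
      ≤ ∫ θ, u (θ, ω) * Real.log (u (θ, ω)) ∂P := by
  have h1 : ∀ᵐ ω ∂ρ, ∀ᵐ θ ∂P, 1 ≤ u (θ, ω) :=
    Measure.ae_ae_of_ae_prod (ae_swap_prod hu1)
  filter_upwards [h1, hui.prod_left_ae, huli.prod_left_ae, mix_v_one hu1 hui]
    with ω hω hint hlint hv1
  set v := ∫ θ, u (θ, ω) ∂P with hv
  have hv0 : 0 < v := lt_of_lt_of_le one_pos hv1
  have hpt : ∀ᵐ θ ∂P, u (θ, ω) * Real.log v + (u (θ, ω) - v)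
      ≤ u (θ, ω) * Real.log (u (θ, ω)) := by
    filter_upwards [hω] with θ hθ
    have := mul_log_lb (le_trans zero_le_one hθ) hv0
    linarith
  have hlhs : Integrable (fun θ => u (θ, ω) * Real.log v + (u (θ, ω) - v)) P :=
    (hint.mul_const _).add (hint.sub (integrable_const v))
  have := integral_mono_ae hlhs hlint hpt
  rw [integral_add (by exact hint.mul_const _) (by exact hint.sub (integrable_const v)),
    integral_sub hint (integrable_const v), integral_mul_const, integral_const] at this
  simp only [measure_univ, probReal_univ, ENNReal.toReal_one, smul_eq_mul, one_mul, ← hv] at this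
  linarith

lemma mix_vlogv_int (hu : Measurable u) (hu1 : ∀ᵐ p ∂P.prod ρ, 1 ≤ u p)
    (hui : Integrable u (P.prod ρ))
    (huli : Integrable (fun p => u p * Real.log (u p)) (P.prod ρ)) :
    Integrable (fun ω => (∫ θ, u (θ, ω) ∂P) * Real.log (∫ θ, u (θ, ω) ∂P)) ρ := by
  have hw : Integrable (fun ω => ∫ θ, u (θ, ω) * Real.log (u (θ, ω)) ∂P) ρ :=
    huli.integral_prod_right
  apply Integrable.mono' hw
  · exact ((mix_v_meas hu).mul ((Real.measurable_log).comp (mix_v_meas hu))).aestronglyMeasurable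
  · filter_upwards [mix_vlogv_bound hu hu1 hui huli, mix_v_one hu1 hui] with ω h1 h2
    have hnn : 0 ≤ (∫ θ, u (θ, ω) ∂P) * Real.log (∫ θ, u (θ, ω) ∂P) :=
      mul_nonneg (le_trans zero_le_one h2) (Real.log_nonneg h2)
    rw [Real.norm_eq_abs, abs_of_nonneg hnn]
    exact h1

lemma mix_ent_le (hu : Measurable u) (hu1 : ∀ᵐ p ∂P.prod ρ, 1 ≤ u p)
    (hui : Integrable u (P.prod ρ))
    (huli : Integrable (fun p => u p * Real.log (u p)) (P.prod ρ)) :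
    ent ρ (fun ω => ∫ θ, u (θ, ω) ∂P) ≤ ∫ θ, ent ρ (fun ω => u (θ, ω)) ∂P := by
  set v := fun ω => ∫ θ, u (θ, ω) ∂P with hvdef
  have hv_meas : Measurable v := mix_v_meas hu
  have hv_int : Integrable v ρ := hui.integral_prod_right
  have hv_one : ∀ᵐ ω ∂ρ, 1 ≤ v ω := mix_v_one hu1 hui
  have hvlv_int : Integrable (fun ω => v ω * Real.log (v ω)) ρ := mix_vlogv_int hu hu1 hui huli
  set m := ∫ ω, v ω ∂ρ with hmdef
  have hm1 : 1 ≤ m := one_le_integral hv_one hv_int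
  have hm0 : 0 < m := lt_of_lt_of_le one_pos hm1
  set h := fun ω => Real.log (v ω) - Real.log m with hhdef
  have hh_meas : Measurable h := ((Real.measurable_log).comp hv_meas).sub measurable_const
  have hexp_ae : (fun ω => Real.exp (h ω)) =ᵐ[ρ] fun ω => v ω / m := by
    filter_upwards [hv_one] with ω h1
    rw [hhdef]
    simp only
    rw [Real.exp_sub, Real.exp_log (lt_of_lt_of_le one_pos h1), Real.exp_log hm0]
  have hexp_int : Integrable (fun ω => Real.exp (h ω)) ρ :=
    (hv_int.div_const m).congr hexp_ae.symm
  have hexp1 : ∫ ω, Real.exp (h ω) ∂ρ ≤ 1 := by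
    rw [integral_congr_ae hexp_ae, integral_div, ← hmdef, div_self (ne_of_gt hm0)]
  have hg1_int : Integrable (fun p : A × Ω => u p * Real.log (v p.2)) (P.prod ρ) := by
    have hmeas : AEStronglyMeasurable (fun p : A × Ω => u p * Real.log (v p.2)) (P.prod ρ) :=
      (hu.mul ((Real.measurable_log).comp (hv_meas.comp measurable_snd))).aestronglyMeasurable
    rw [integrable_prod_iff' hmeas]
    constructor
    · filter_upwards [hui.prod_left_ae] with ω hω
      exact hω.mul_const _
    · have hae : (fun ω => ∫ θ, ‖u (θ, ω) * Real.log (v ω)‖ ∂P)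
          =ᵐ[ρ] fun ω => v ω * Real.log (v ω) := by
        filter_upwards [Measure.ae_ae_of_ae_prod (ae_swap_prod hu1), hui.prod_left_ae,
          hv_one] with ω hω hint hv1
        have hnrm : ∀ᵐ θ ∂P, ‖u (θ, ω) * Real.log (v ω)‖ = u (θ, ω) * Real.log (v ω) := by
          filter_upwards [hω] with θ hθ
          rw [Real.norm_eq_abs, abs_of_nonneg]
          exact mul_nonneg (le_trans zero_le_one hθ) (Real.log_nonneg hv1)
        rw [integral_congr_ae hnrm, integral_mul_const]
      exact hvlv_int.congr hae.symm
  have hU_meas : Measurable (fun p : A × Ω => u p * h p.2) :=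
    hu.mul (hh_meas.comp measurable_snd)
  have hg2_int : Integrable (fun p : A × Ω => u p * Real.log m) (P.prod ρ) := hui.mul_const _
  have hU_int : Integrable (fun p : A × Ω => u p * h p.2) (P.prod ρ) := by
    apply Integrable.mono' (by exact hg1_int.add hg2_int) hU_meas.aestronglyMeasurable
    filter_upwards [hu1, ae_snd_prod hv_one] with p hp1 hp2
    have hu0 : 0 ≤ u p := le_trans zero_le_one hp1
    have hlv : 0 ≤ Real.log (v p.2) := Real.log_nonneg hp2
    have hlm : 0 ≤ Real.log m := Real.log_nonneg hm1
    rw [Real.norm_eq_abs, abs_mul]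
    have habs : |h p.2| ≤ Real.log (v p.2) + Real.log m := by
      rw [hhdef]
      simp only
      calc |Real.log (v p.2) - Real.log m| ≤ |Real.log (v p.2)| + |Real.log m| := abs_sub _ _
      _ = Real.log (v p.2) + Real.log m := by rw [abs_of_nonneg hlv, abs_of_nonneg hlm]
    calc |u p| * |h p.2| = u p * |h p.2| := by rw [abs_of_nonneg hu0]
    _ ≤ u p * (Real.log (v p.2) + Real.log m) := mul_le_mul_of_nonneg_left habs hu0
    _ = u p * Real.log (v p.2) + u p * Real.log m := by ring
  have hent_v : ent ρ v = ∫ ω, v ω * h ω ∂ρ := by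
    unfold ent
    have hfun : ∀ ω, v ω * h ω = v ω * Real.log (v ω) - v ω * Real.log m := by
      intro ω; rw [hhdef]; ring
    simp_rw [hfun]
    rw [integral_sub hvlv_int (by exact hv_int.mul_const _), integral_mul_const, ← hmdef]
  have hfub1 : ∫ p, u p * h p.2 ∂(P.prod ρ) = ∫ ω, v ω * h ω ∂ρ := by
    rw [integral_prod_symm _ hU_int]
    apply integral_congr_ae
    filter_upwards with ω
    rw [integral_mul_const]
  have hfub2 : ∫ p, u p * h p.2 ∂(P.prod ρ) = ∫ θ, ∫ ω, u (θ, ω) * h ω ∂ρ ∂P :=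
    integral_prod _ hU_int
  have hperθ : ∀ᵐ θ ∂P, ∫ ω, u (θ, ω) * h ω ∂ρ ≤ ent ρ (fun ω => u (θ, ω)) := by
    filter_upwards [Measure.ae_ae_of_ae_prod hu1, hui.prod_right_ae, huli.prod_right_ae,
      hU_int.prod_right_ae] with θ h1 h2 h3 h4
    exact integral_mul_le_ent h1 h2 h3 hh_meas h4 hexp_int hexp1
  have hL : Integrable (fun θ => ∫ ω, u (θ, ω) * h ω ∂ρ) P := hU_int.integral_prod_left
  have hA : Integrable (fun θ => ∫ ω, u (θ, ω) * Real.log (u (θ, ω)) ∂ρ) P :=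
    huli.integral_prod_left
  have hmθ_meas : Measurable (fun θ => ∫ ω, u (θ, ω) ∂ρ) :=
    (hu.stronglyMeasurable.integral_prod_right').measurable
  have hB : Integrable (fun θ => (∫ ω, u (θ, ω) ∂ρ) * Real.log (∫ ω, u (θ, ω) ∂ρ)) P := by
    apply Integrable.mono' hA
    · exact (hmθ_meas.mul ((Real.measurable_log).comp hmθ_meas)).aestronglyMeasurable
    · filter_upwards [Measure.ae_ae_of_ae_prod hu1, hui.prod_right_ae, huli.prod_right_ae]
        with θ h1 h2 h3
      have hent0 := ent_nonneg h1 h2 h3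
      have hm1θ : 1 ≤ ∫ ω, u (θ, ω) ∂ρ := one_le_integral h1 h2
      have hnn : 0 ≤ (∫ ω, u (θ, ω) ∂ρ) * Real.log (∫ ω, u (θ, ω) ∂ρ) :=
        mul_nonneg (le_trans zero_le_one hm1θ) (Real.log_nonneg hm1θ)
      rw [Real.norm_eq_abs, abs_of_nonneg hnn]
      unfold ent at hent0
      linarith [hent0]
  have hR : Integrable (fun θ => ent ρ (fun ω => u (θ, ω))) P := by
    have hfun : (fun θ => ent ρ (fun ω => u (θ, ω)))
        = fun θ => (∫ ω, u (θ, ω) * Real.log (u (θ, ω)) ∂ρ)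
            - (∫ ω, u (θ, ω) ∂ρ) * Real.log (∫ ω, u (θ, ω) ∂ρ) := rfl
    rw [hfun]
    exact hA.sub hB
  have hfin := integral_mono_ae hL hR hperθ
  rw [hent_v, ← hfub1, hfub2]
  exact hfin

end Mixing


/-! ### Per-coordinate entropy -/

section Tensor

variable {𝒳 : Type*} [MeasurableSpace 𝒳] (μ : Measure 𝒳) [IsProbabilityMeasure μ]

noncomputable def entK (n : ℕ) (k : Fin n) (Y : (Fin n → 𝒳) → ℝ) (x : Fin n → 𝒳) : ℝ :=
  (∫ y, Y (Function.update x k y) * Real.log (Y (Function.update x k y)) ∂μ)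
    - (∫ y, Y (Function.update x k y) ∂μ) * Real.log (∫ y, Y (Function.update x k y) ∂μ)

lemma entK_eq_ent (n : ℕ) (k : Fin n) (Y : (Fin n → 𝒳) → ℝ) (x : Fin n → 𝒳) :
    entK μ n k Y x = ent μ (fun y => Y (Function.update x k y)) := rfl

variable {n : ℕ} {Y : (Fin n → 𝒳) → ℝ}

lemma upd_comp_integrable (k : Fin n) {g : (Fin n → 𝒳) → ℝ}
    (hg : Measurable g) (hgi : Integrable g (piM μ n)) :
    Integrable (fun p : (Fin n → 𝒳) × 𝒳 => g (Function.update p.1 k p.2))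
      ((piM μ n).prod μ) := by
  have := ((mp_update μ n k).integrable_comp hg.aestronglyMeasurable).2 hgi
  exact this

lemma upd_ae_one (k : Fin n) (hY1 : ∀ᵐ x ∂piM μ n, 1 ≤ Y x) :
    ∀ᵐ p ∂(piM μ n).prod μ, 1 ≤ Y (Function.update p.1 k p.2) :=
  ((mp_update μ n k).quasiMeasurePreserving.tendsto_ae).eventually hY1

lemma entK_meas (k : Fin n) (hY : Measurable Y) : Measurable (entK μ n k Y) := by
  have hcomp : Measurable (fun p : (Fin n → 𝒳) × 𝒳 => Y (Function.update p.1 k p.2)) :=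
    hY.comp measurable_update'
  have h1 : Measurable (fun x => ∫ y, Y (Function.update x k y)
      * Real.log (Y (Function.update x k y)) ∂μ) :=
    ((hcomp.mul ((Real.measurable_log).comp hcomp)).stronglyMeasurable.integral_prod_right').measurable
  have h2 : Measurable (fun x => ∫ y, Y (Function.update x k y) ∂μ) :=
    (hcomp.stronglyMeasurable.integral_prod_right').measurable
  exact h1.sub (h2.mul ((Real.measurable_log).comp h2))

lemma entK_nonneg (k : Fin n) (hY : Measurable Y) (hY1 : ∀ᵐ x ∂piM μ n, 1 ≤ Y x)
    (hYi : Integrable Y (piM μ n))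
    (hYli : Integrable (fun x => Y x * Real.log (Y x)) (piM μ n)) :
    ∀ᵐ x ∂piM μ n, 0 ≤ entK μ n k Y x := by
  filter_upwards [(upd_comp_integrable μ k hY hYi).prod_right_ae,
    (upd_comp_integrable μ k (hY.mul ((Real.measurable_log).comp hY)) hYli).prod_right_ae,
    Measure.ae_ae_of_ae_prod (upd_ae_one μ k hY1)] with x h1 h2 h3
  rw [entK_eq_ent]
  exact ent_nonneg h3 h1 h2

lemma entK_int (k : Fin n) (hY : Measurable Y) (hY1 : ∀ᵐ x ∂piM μ n, 1 ≤ Y x)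
    (hYi : Integrable Y (piM μ n))
    (hYli : Integrable (fun x => Y x * Real.log (Y x)) (piM μ n)) :
    Integrable (entK μ n k Y) (piM μ n) := by
  have hW : Integrable (fun x => ∫ y, Y (Function.update x k y)
      * Real.log (Y (Function.update x k y)) ∂μ) (piM μ n) :=
    (upd_comp_integrable μ k (hY.mul ((Real.measurable_log).comp hY)) hYli).integral_prod_left
  apply Integrable.mono' hW ((entK_meas μ k hY).aestronglyMeasurable)
  filter_upwards [entK_nonneg μ k hY hY1 hYi hYli,
    (upd_comp_integrable μ k hY hYi).prod_right_ae,
    Measure.ae_ae_of_ae_prod (upd_ae_one μ k hY1)] with x h0 h1 h3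
  rw [Real.norm_eq_abs, abs_of_nonneg h0]
  have hJ1 : 1 ≤ ∫ y, Y (Function.update x k y) ∂μ := one_le_integral h3 h1
  have hJnn : 0 ≤ (∫ y, Y (Function.update x k y) ∂μ)
      * Real.log (∫ y, Y (Function.update x k y) ∂μ) :=
    mul_nonneg (le_trans zero_le_one hJ1) (Real.log_nonneg hJ1)
  unfold entK
  linarith

end Tensor


/-! ### Tensorization of entropy -/

section Tensorization

variable {𝒳 : Type*} [MeasurableSpace 𝒳] (μ : Measure 𝒳) [IsProbabilityMeasure μ]

lemma tensorization : ∀ (n : ℕ) (Y : (Fin n → 𝒳) → ℝ), Measurable Y →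
    (∀ᵐ x ∂piM μ n, 1 ≤ Y x) → Integrable Y (piM μ n) →
    Integrable (fun x => Y x * Real.log (Y x)) (piM μ n) →
    ent (piM μ n) Y ≤ ∑ k : Fin n, ∫ x, entK μ n k Y x ∂piM μ n := by
  intro n
  induction n with
  | zero =>
    intro Y hY hY1 hYi hYli
    have hint : ∀ (g : (Fin 0 → 𝒳) → ℝ), ∫ x, g x ∂piM μ 0 = g (fun i => i.elim0) := by
      intro g
      have hg : g = fun _ => g (fun i => i.elim0) := by
        funext x; congr 1; funext i; exact i.elim0
      rw [hg, integral_const]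
      simp
    unfold ent
    rw [hint (fun x => Y x * Real.log (Y x)), hint Y]
    simp
  | succ n IH =>
    intro Y hY hY1 hYi hYli
    have hMP : MeasurePreserving (fun p : 𝒳 × (Fin n → 𝒳) => (Fin.cons p.1 p.2 : Fin (n+1) → 𝒳))
        (μ.prod (piM μ n)) (piM μ (n+1)) := mp_cons μ n
    have key : ∀ (F : (Fin (n+1) → 𝒳) → ℝ), Measurable F →
        ∫ x, F x ∂piM μ (n+1) = ∫ p : 𝒳 × (Fin n → 𝒳), F (Fin.cons p.1 p.2) ∂(μ.prod (piM μ n)) := by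
      intro F hF
      rw [← hMP.map_eq, integral_map hMP.measurable.aemeasurable hF.aestronglyMeasurable]
    have hYL_meas : Measurable (fun x => Y x * Real.log (Y x)) :=
      hY.mul ((Real.measurable_log).comp hY)
    have hYhat_meas : Measurable (fun p : 𝒳 × (Fin n → 𝒳) => Y (Fin.cons p.1 p.2)) :=
      hY.comp hMP.measurable
    have hYhat1 : ∀ᵐ p ∂μ.prod (piM μ n), 1 ≤ Y (Fin.cons p.1 p.2) :=
      (hMP.quasiMeasurePreserving.tendsto_ae).eventually hY1
    have hYhat_int : Integrable (fun p : 𝒳 × (Fin n → 𝒳) => Y (Fin.cons p.1 p.2))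
        (μ.prod (piM μ n)) := (hMP.integrable_comp hY.aestronglyMeasurable).2 hYi
    have hYLhat_int : Integrable
        (fun p : 𝒳 × (Fin n → 𝒳) => Y (Fin.cons p.1 p.2) * Real.log (Y (Fin.cons p.1 p.2)))
        (μ.prod (piM μ n)) := (hMP.integrable_comp hYL_meas.aestronglyMeasurable).2 hYli
    -- the marginal g
    have hg_meas : Measurable (fun w : Fin n → 𝒳 => ∫ c, Y (Fin.cons c w) ∂μ) :=
      mix_v_meas hYhat_meas
    have hg_int : Integrable (fun w : Fin n → 𝒳 => ∫ c, Y (Fin.cons c w) ∂μ) (piM μ n) :=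
      hYhat_int.integral_prod_right
    have hg_one : ∀ᵐ w ∂piM μ n, 1 ≤ ∫ c, Y (Fin.cons c w) ∂μ := mix_v_one hYhat1 hYhat_int
    have hglg_int : Integrable (fun w : Fin n → 𝒳 =>
        (∫ c, Y (Fin.cons c w) ∂μ) * Real.log (∫ c, Y (Fin.cons c w) ∂μ)) (piM μ n) :=
      mix_vlogv_int hYhat_meas hYhat1 hYhat_int hYLhat_int
    -- inner conditional entropy integrand (as a function of w)
    have hA_int : Integrable (fun w : Fin n → 𝒳 =>
        ∫ c, Y (Fin.cons c w) * Real.log (Y (Fin.cons c w)) ∂μ) (piM μ n) :=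
      hYLhat_int.integral_prod_right
    -- chain identity
    have hYLid : ∫ x, Y x * Real.log (Y x) ∂piM μ (n+1)
        = ∫ w, (∫ c, Y (Fin.cons c w) * Real.log (Y (Fin.cons c w)) ∂μ) ∂piM μ n := by
      rw [key _ hYL_meas, integral_prod_symm _ hYLhat_int]
    have hYid : ∫ x, Y x ∂piM μ (n+1) = ∫ w, (∫ c, Y (Fin.cons c w) ∂μ) ∂piM μ n := by
      rw [key Y hY, integral_prod_symm _ hYhat_int]
    have hsplit : ent (piM μ (n+1)) Y
        = (∫ w, ent μ (fun c => Y (Fin.cons c w)) ∂piM μ n)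
          + ent (piM μ n) (fun w => ∫ c, Y (Fin.cons c w) ∂μ) := by
      have hent_expand : ∫ w, ent μ (fun c => Y (Fin.cons c w)) ∂piM μ n
          = (∫ w, (∫ c, Y (Fin.cons c w) * Real.log (Y (Fin.cons c w)) ∂μ) ∂piM μ n)
            - ∫ w, (∫ c, Y (Fin.cons c w) ∂μ) * Real.log (∫ c, Y (Fin.cons c w) ∂μ) ∂piM μ n := by
        rw [← integral_sub hA_int hglg_int]
        rfl
      rw [hent_expand]
      show (∫ x, Y x * Real.log (Y x) ∂piM μ (n+1))
          - (∫ x, Y x ∂piM μ (n+1)) * Real.log (∫ x, Y x ∂piM μ (n+1)) = _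
      rw [hYLid, hYid]
      show _ = _ + ((∫ w, (∫ c, Y (Fin.cons c w) ∂μ) * Real.log (∫ c, Y (Fin.cons c w) ∂μ)
            ∂piM μ n)
          - (∫ w, (∫ c, Y (Fin.cons c w) ∂μ) ∂piM μ n)
            * Real.log (∫ w, (∫ c, Y (Fin.cons c w) ∂μ) ∂piM μ n))
      ring
    -- the k = 0 term
    have hT0 : ∫ x, entK μ (n+1) 0 Y x ∂piM μ (n+1)
        = ∫ w, ent μ (fun c => Y (Fin.cons c w)) ∂piM μ n := by
      rw [key _ (entK_meas μ 0 hY)]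
      have hfun : (fun p : 𝒳 × (Fin n → 𝒳) => entK μ (n+1) 0 Y (Fin.cons p.1 p.2))
          = fun p : 𝒳 × (Fin n → 𝒳) => ent μ (fun c => Y (Fin.cons c p.2)) := by
        funext p
        rw [entK_eq_ent]
        congr 1
        funext y
        congr 1
        exact Fin.update_cons_zero (α := fun _ => 𝒳) p.1 p.2 y
      rw [hfun]
      have hF0_meas : Measurable (fun w : Fin n → 𝒳 => ent μ (fun c => Y (Fin.cons c w))) := by
        have h1 : Measurable (fun w : Fin n → 𝒳 =>
            ∫ c, Y (Fin.cons c w) * Real.log (Y (Fin.cons c w)) ∂μ) :=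
          ((hYhat_meas.mul ((Real.measurable_log).comp hYhat_meas)).stronglyMeasurable.integral_prod_left').measurable
        exact h1.sub (hg_meas.mul ((Real.measurable_log).comp hg_meas))
      exact integral_snd_prod μ (piM μ n) hF0_meas.aestronglyMeasurable
    -- induction hypothesis for g
    have hIH := IH (fun w => ∫ c, Y (Fin.cons c w) ∂μ) hg_meas hg_one hg_int hglg_int
    -- per-coordinate comparison
    have hstep : ∀ k : Fin n,
        ∫ w, entK μ n k (fun w => ∫ c, Y (Fin.cons c w) ∂μ) w ∂piM μ n
          ≤ ∫ x, entK μ (n+1) k.succ Y x ∂piM μ (n+1) := by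
      intro k
      have he_meas : Measurable (entK μ (n+1) k.succ Y) := entK_meas μ k.succ hY
      have he_int : Integrable (entK μ (n+1) k.succ Y) (piM μ (n+1)) :=
        entK_int μ k.succ hY hY1 hYi hYli
      have heC_int : Integrable (fun p : 𝒳 × (Fin n → 𝒳) =>
          entK μ (n+1) k.succ Y (Fin.cons p.1 p.2)) (μ.prod (piM μ n)) :=
        (hMP.integrable_comp he_meas.aestronglyMeasurable).2 he_int
      have hMPT : MeasurePreserving (fun q : (𝒳 × 𝒳) × (Fin n → 𝒳) =>
          (Fin.cons q.1.1 (Function.update q.2 k q.1.2) : Fin (n+1) → 𝒳))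
          ((μ.prod μ).prod (piM μ n)) (piM μ (n+1)) := mp_consUpd μ n k
      have hT_meas : Measurable (fun q : (𝒳 × 𝒳) × (Fin n → 𝒳) =>
          Y (Fin.cons q.1.1 (Function.update q.2 k q.1.2))) := hY.comp hMPT.measurable
      have hT1 : ∀ᵐ q ∂(μ.prod μ).prod (piM μ n),
          1 ≤ Y (Fin.cons q.1.1 (Function.update q.2 k q.1.2)) :=
        (hMPT.quasiMeasurePreserving.tendsto_ae).eventually hY1
      have hTi : Integrable (fun q : (𝒳 × 𝒳) × (Fin n → 𝒳) =>
          Y (Fin.cons q.1.1 (Function.update q.2 k q.1.2))) ((μ.prod μ).prod (piM μ n)) :=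
        (hMPT.integrable_comp hY.aestronglyMeasurable).2 hYi
      have hTli : Integrable (fun q : (𝒳 × 𝒳) × (Fin n → 𝒳) =>
          Y (Fin.cons q.1.1 (Function.update q.2 k q.1.2))
            * Real.log (Y (Fin.cons q.1.1 (Function.update q.2 k q.1.2))))
          ((μ.prod μ).prod (piM μ n)) :=
        (hMPT.integrable_comp hYL_meas.aestronglyMeasurable).2 hYli
      have hae1 : ∀ᵐ w ∂piM μ n, ∀ᵐ p ∂μ.prod μ,
          1 ≤ Y (Fin.cons p.1 (Function.update w k p.2)) :=
        Measure.ae_ae_of_ae_prod (ae_swap_prod hT1)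
      have haei : ∀ᵐ w ∂piM μ n, Integrable
          (fun p : 𝒳 × 𝒳 => Y (Fin.cons p.1 (Function.update w k p.2))) (μ.prod μ) :=
        hTi.prod_left_ae
      have haeli : ∀ᵐ w ∂piM μ n, Integrable
          (fun p : 𝒳 × 𝒳 => Y (Fin.cons p.1 (Function.update w k p.2))
            * Real.log (Y (Fin.cons p.1 (Function.update w k p.2)))) (μ.prod μ) :=
        hTli.prod_left_ae
      have hptwise : ∀ᵐ w ∂piM μ n,
          entK μ n k (fun w => ∫ c, Y (Fin.cons c w) ∂μ) w
            ≤ ∫ c, entK μ (n+1) k.succ Y (Fin.cons c w) ∂μ := by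
        filter_upwards [hae1, haei, haeli] with w h1 h2 h3
        have hu_meas : Measurable (fun p : 𝒳 × 𝒳 =>
            Y (Fin.cons p.1 (Function.update w k p.2))) := by
          have hm : Measurable (fun p : 𝒳 × 𝒳 => ((p.1, p.2), w)) :=
            ((measurable_fst.prodMk measurable_snd).prodMk measurable_const)
          exact hT_meas.comp hm
        have hmix := mix_ent_le hu_meas h1 h2 h3
        have hLeq : (fun y => ∫ c, Y (Fin.cons c (Function.update w k y)) ∂μ)
            = fun y => (fun w => ∫ c, Y (Fin.cons c w) ∂μ) (Function.update w k y) := rfl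
        have hReq : ∀ c, ent μ (fun y => Y (Fin.cons c (Function.update w k y)))
            = entK μ (n+1) k.succ Y (Fin.cons c w) := by
          intro c
          rw [entK_eq_ent]
          congr 1
          funext y
          congr 1
          exact Fin.cons_update (α := fun _ => 𝒳) c w k y
        calc entK μ n k (fun w => ∫ c, Y (Fin.cons c w) ∂μ) w
            = ent μ (fun y => ∫ c, Y (Fin.cons c (Function.update w k y)) ∂μ) := by
              rw [entK_eq_ent]
          _ ≤ ∫ c, ent μ (fun y => Y (Fin.cons c (Function.update w k y))) ∂μ := hmix
          _ = ∫ c, entK μ (n+1) k.succ Y (Fin.cons c w) ∂μ := by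
              apply integral_congr_ae
              filter_upwards with c
              rw [hReq c]
      have hRHS_int : Integrable (fun w : Fin n → 𝒳 =>
          ∫ c, entK μ (n+1) k.succ Y (Fin.cons c w) ∂μ) (piM μ n) :=
        heC_int.integral_prod_right
      have hLHS_int : Integrable
          (entK μ n k (fun w => ∫ c, Y (Fin.cons c w) ∂μ)) (piM μ n) :=
        entK_int μ k hg_meas hg_one hg_int hglg_int
      have := integral_mono_ae hLHS_int hRHS_int hptwise
      calc ∫ w, entK μ n k (fun w => ∫ c, Y (Fin.cons c w) ∂μ) w ∂piM μ n
          ≤ ∫ w, ∫ c, entK μ (n+1) k.succ Y (Fin.cons c w) ∂μ ∂piM μ n := this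
        _ = ∫ p : 𝒳 × (Fin n → 𝒳), entK μ (n+1) k.succ Y (Fin.cons p.1 p.2) ∂μ.prod (piM μ n) :=
            (integral_prod_symm _ heC_int).symm
        _ = ∫ x, entK μ (n+1) k.succ Y x ∂piM μ (n+1) := (key _ he_meas).symm
    -- assemble
    rw [Fin.sum_univ_succ]
    have hsum : ∑ k : Fin n, ∫ w, entK μ n k (fun w => ∫ c, Y (Fin.cons c w) ∂μ) w ∂piM μ n
        ≤ ∑ k : Fin n, ∫ x, entK μ (n+1) k.succ Y x ∂piM μ (n+1) :=
      Finset.sum_le_sum (fun k _ => hstep k)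
    rw [hsplit, ← hT0]
    linarith [hIH, hsum]

end Tensorization


/-! ### The self-bounding entropy bound -/

section SelfBound

variable {𝒳 : Type*} [MeasurableSpace 𝒳] (μ : Measure 𝒳) [IsProbabilityMeasure μ]
variable {n : ℕ} {f : (Fin n → 𝒳) → ℝ}

noncomputable def wK (k : Fin n) (f : (Fin n → 𝒳) → ℝ) (x : Fin n → 𝒳) : ℝ :=
  aeInf μ (fun y => f (Function.update x k y))

lemma wK_meas (k : Fin n) (hf : Measurable f) (hnn : ∀ x, 0 ≤ f x) :
    Measurable (wK μ k f) := by
  have hF : Measurable (fun p : (Fin n → 𝒳) × 𝒳 => f (Function.update p.1 k p.2)) :=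
    hf.comp measurable_update'
  exact measurable_aeInf_comp μ hF (fun p => hnn _)

lemma wK_nonneg (k : Fin n) (hnn : ∀ x, 0 ≤ f x) (x : Fin n → 𝒳) : 0 ≤ wK μ k f x :=
  le_aeInf μ (Eventually.of_forall (fun y => hnn _))

lemma wK_le_ae (k : Fin n) (hnn : ∀ x, 0 ≤ f x) (x : Fin n → 𝒳) :
    ∀ᵐ y ∂μ, wK μ k f x ≤ f (Function.update x k y) :=
  aeInf_ae_le μ (Eventually.of_forall (fun y => hnn _))

lemma iInf_le_wK (k : Fin n) (hnn : ∀ x, 0 ≤ f x) (x : Fin n → 𝒳) :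
    (⨅ y : 𝒳, f (Function.update x k y)) ≤ wK μ k f x := by
  apply le_aeInf μ
  filter_upwards with y
  apply ciInf_le
  refine ⟨0, ?_⟩
  rintro _ ⟨y', rfl⟩
  exact hnn _

lemma wK_update (k : Fin n) (x : Fin n → 𝒳) (y : 𝒳) :
    wK μ k f (Function.update x k y) = wK μ k f x := by
  unfold wK
  congr 1
  funext y'
  rw [Function.update_idem]

lemma wK_le_f_ae (k : Fin n) (hf : Measurable f) (hnn : ∀ x, 0 ≤ f x) :
    ∀ᵐ x ∂piM μ n, wK μ k f x ≤ f x := by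
  have hwm : Measurable (wK μ k f) := wK_meas μ k hf hnn
  have hQc : MeasurableSet {u : Fin n → 𝒳 | ¬ wK μ k f u ≤ f u} :=
    (measurableSet_le hwm hf).compl
  rw [ae_iff]
  rw [← (mp_update μ n k).map_eq, Measure.map_apply (mp_update μ n k).measurable hQc]
  have hpre : (fun p : (Fin n → 𝒳) × 𝒳 => Function.update p.1 k p.2) ⁻¹'
      {u | ¬ wK μ k f u ≤ f u}
      = {p : (Fin n → 𝒳) × 𝒳 | ¬ wK μ k f p.1 ≤ f (Function.update p.1 k p.2)} := by
    ext p
    simp only [mem_preimage, mem_setOf_eq, wK_update]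
  rw [hpre]
  have hprod : ∀ᵐ p ∂(piM μ n).prod μ, wK μ k f p.1 ≤ f (Function.update p.1 k p.2) := by
    rw [Measure.ae_prod_iff_ae_ae]
    · filter_upwards with x
      exact wK_le_ae μ k hnn x
    · exact measurableSet_le (hwm.comp measurable_fst) (hf.comp measurable_update')
  rw [ae_iff] at hprod
  exact hprod

lemma ent_exp_bound (hf : Measurable f) (hnn : ∀ x, 0 ≤ f x) {a : ℝ}
    (hsb : ∀ x, ∑ k : Fin n, (f x - ⨅ y : 𝒳, f (Function.update x k y)) ^ 2 ≤ a * f x)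
    {t : ℝ} (ht : 0 < t)
    (h1 : Integrable (fun x => Real.exp (t * f x)) (piM μ n))
    (h2 : Integrable (fun x => f x * Real.exp (t * f x)) (piM μ n))
    (h3 : Integrable (fun x => f x ^ 2 * Real.exp (t * f x)) (piM μ n)) :
    ent (piM μ n) (fun x => Real.exp (t * f x))
      ≤ a * t ^ 2 / 2 * ∫ x, f x * Real.exp (t * f x) ∂piM μ n := by
  have hY_meas : Measurable (fun x => Real.exp (t * f x)) :=
    Real.measurable_exp.comp (hf.const_mul t)
  have hY1 : ∀ᵐ x ∂piM μ n, 1 ≤ Real.exp (t * f x) := by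
    filter_upwards with x
    rw [← Real.exp_zero]
    exact Real.exp_le_exp.2 (mul_nonneg ht.le (hnn x))
  have hYli : Integrable (fun x => Real.exp (t * f x) * Real.log (Real.exp (t * f x)))
      (piM μ n) := by
    have hfun : (fun x => Real.exp (t * f x) * Real.log (Real.exp (t * f x)))
        = fun x => t * (f x * Real.exp (t * f x)) := by
      funext x; rw [Real.log_exp]; ring
    rw [hfun]
    exact h2.const_mul t
  have htens := tensorization μ n _ hY_meas hY1 h1 hYli
  -- per-coordinate bound
  have hTk_meas : ∀ k : Fin n, Measurable (fun u =>
      (f u - wK μ k f u) ^ 2 * Real.exp (t * f u)) := by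
    intro k
    exact ((hf.sub (wK_meas μ k hf hnn)).pow_const 2).mul hY_meas
  have hTk_int : ∀ k : Fin n, Integrable (fun u =>
      (f u - wK μ k f u) ^ 2 * Real.exp (t * f u)) (piM μ n) := by
    intro k
    apply Integrable.mono' h3 (hTk_meas k).aestronglyMeasurable
    filter_upwards [wK_le_f_ae μ k hf hnn] with u hu
    have hw0 := wK_nonneg μ k hnn u
    have hsq : (f u - wK μ k f u) ^ 2 ≤ f u ^ 2 := by nlinarith
    rw [Real.norm_eq_abs, abs_of_nonneg (mul_nonneg (sq_nonneg _) (Real.exp_pos _).le)]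
    exact mul_le_mul_of_nonneg_right hsq (Real.exp_pos _).le
  have hTkC_int : ∀ k : Fin n, Integrable (fun p : (Fin n → 𝒳) × 𝒳 =>
      (f (Function.update p.1 k p.2) - wK μ k f (Function.update p.1 k p.2)) ^ 2
        * Real.exp (t * f (Function.update p.1 k p.2))) ((piM μ n).prod μ) := by
    intro k
    exact upd_comp_integrable μ k (hTk_meas k) (hTk_int k)
  have hTk_change : ∀ k : Fin n,
      ∫ p : (Fin n → 𝒳) × 𝒳, ((f (Function.update p.1 k p.2)
          - wK μ k f (Function.update p.1 k p.2)) ^ 2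
        * Real.exp (t * f (Function.update p.1 k p.2))) ∂(piM μ n).prod μ
      = ∫ u, (f u - wK μ k f u) ^ 2 * Real.exp (t * f u) ∂piM μ n := by
    intro k
    have hm : AEStronglyMeasurable (fun u => (f u - wK μ k f u) ^ 2 * Real.exp (t * f u))
        (Measure.map (fun p : (Fin n → 𝒳) × 𝒳 => Function.update p.1 k p.2)
          ((piM μ n).prod μ)) := by
      rw [(mp_update μ n k).map_eq]
      exact (hTk_meas k).aestronglyMeasurable
    have h := integral_map (mp_update μ n k).measurable.aemeasurable hm
    rw [(mp_update μ n k).map_eq] at h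
    exact h.symm
  have hperk : ∀ k : Fin n, ∫ x, entK μ n k (fun x => Real.exp (t * f x)) x ∂piM μ n
      ≤ t ^ 2 / 2 * ∫ u, (f u - wK μ k f u) ^ 2 * Real.exp (t * f u) ∂piM μ n := by
    intro k
    have hBk_int : Integrable (fun x => ∫ y,
        (f (Function.update x k y) - wK μ k f x) ^ 2
          * Real.exp (t * f (Function.update x k y)) ∂μ) (piM μ n) := by
      have := (hTkC_int k).integral_prod_left
      apply this.congr
      filter_upwards with x
      apply integral_congr_ae
      filter_upwards with y
      rw [wK_update]
    have hsec1 := (upd_comp_integrable μ k hY_meas h1).prod_right_ae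
    have hsec2 := (upd_comp_integrable μ k (hf.mul hY_meas) h2).prod_right_ae
    have hsec3 := (upd_comp_integrable μ k ((hf.pow_const 2).mul hY_meas) h3).prod_right_ae
    have hptw : ∀ᵐ x ∂piM μ n, entK μ n k (fun x => Real.exp (t * f x)) x
        ≤ t ^ 2 / 2 * ∫ y, (f (Function.update x k y) - wK μ k f x) ^ 2
            * Real.exp (t * f (Function.update x k y)) ∂μ := by
      filter_upwards [hsec1, hsec2, hsec3] with x hs1 hs2 hs3
      have := ent_exp_le (ρ := μ) (g := fun y => f (Function.update x k y))
        (z := wK μ k f x) ht (wK_le_ae μ k hnn x)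
        (Eventually.of_forall (fun y => hnn _)) hs1 hs2 hs3
      exact this
    have := integral_mono_ae
      (entK_int μ k hY_meas hY1 h1 hYli) (hBk_int.const_mul _) hptw
    calc ∫ x, entK μ n k (fun x => Real.exp (t * f x)) x ∂piM μ n
        ≤ ∫ x, t ^ 2 / 2 * ∫ y, (f (Function.update x k y) - wK μ k f x) ^ 2
            * Real.exp (t * f (Function.update x k y)) ∂μ ∂piM μ n := this
      _ = t ^ 2 / 2 * ∫ x, (∫ y, (f (Function.update x k y) - wK μ k f x) ^ 2
            * Real.exp (t * f (Function.update x k y)) ∂μ) ∂piM μ n := integral_const_mul _ _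
      _ = t ^ 2 / 2 * ∫ u, (f u - wK μ k f u) ^ 2 * Real.exp (t * f u) ∂piM μ n := by
          congr 1
          rw [← hTk_change k, integral_prod _ (hTkC_int k)]
          apply integral_congr_ae
          filter_upwards with x
          apply integral_congr_ae
          filter_upwards with y
          rw [wK_update]
  -- sum the bounds
  have hsum_int : Integrable (fun u => ∑ k : Fin n,
      (f u - wK μ k f u) ^ 2 * Real.exp (t * f u)) (piM μ n) :=
    integrable_finset_sum _ (fun k _ => hTk_int k)
  have hptsum : ∀ᵐ u ∂piM μ n, (∑ k : Fin n,
      (f u - wK μ k f u) ^ 2 * Real.exp (t * f u)) ≤ a * (f u * Real.exp (t * f u)) := by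
    have hall : ∀ᵐ u ∂piM μ n, ∀ k : Fin n, wK μ k f u ≤ f u :=
      ae_all_iff.2 (fun k => wK_le_f_ae μ k hf hnn)
    filter_upwards [hall] with u hu
    have hterm : ∀ k : Fin n, (f u - wK μ k f u) ^ 2
        ≤ (f u - ⨅ y : 𝒳, f (Function.update u k y)) ^ 2 := by
      intro k
      have hik := iInf_le_wK μ k hnn u
      have huk := hu k
      nlinarith
    calc (∑ k : Fin n, (f u - wK μ k f u) ^ 2 * Real.exp (t * f u))
        = (∑ k : Fin n, (f u - wK μ k f u) ^ 2) * Real.exp (t * f u) := by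
          rw [Finset.sum_mul]
      _ ≤ (∑ k : Fin n, (f u - ⨅ y : 𝒳, f (Function.update u k y)) ^ 2)
            * Real.exp (t * f u) :=
          mul_le_mul_of_nonneg_right (Finset.sum_le_sum (fun k _ => hterm k))
            (Real.exp_pos _).le
      _ ≤ (a * f u) * Real.exp (t * f u) :=
          mul_le_mul_of_nonneg_right (hsb u) (Real.exp_pos _).le
      _ = a * (f u * Real.exp (t * f u)) := by ring
  have hfinal : ∑ k : Fin n, ∫ u, (f u - wK μ k f u) ^ 2 * Real.exp (t * f u) ∂piM μ n
      ≤ a * ∫ x, f x * Real.exp (t * f x) ∂piM μ n := by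
    rw [← integral_finset_sum _ (fun k _ => hTk_int k), ← integral_const_mul]
    exact integral_mono_ae hsum_int (h2.const_mul a) hptsum
  have hsum2 : ∑ k : Fin n, ∫ x, entK μ n k (fun x => Real.exp (t * f x)) x ∂piM μ n
      ≤ t ^ 2 / 2 * ∑ k : Fin n, ∫ u, (f u - wK μ k f u) ^ 2
          * Real.exp (t * f u) ∂piM μ n := by
    rw [Finset.mul_sum]
    exact Finset.sum_le_sum (fun k _ => hperk k)
  have ht2 : (0:ℝ) ≤ t ^ 2 / 2 := by positivity
  calc ent (piM μ n) (fun x => Real.exp (t * f x))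
      ≤ ∑ k : Fin n, ∫ x, entK μ n k (fun x => Real.exp (t * f x)) x ∂piM μ n := htens
    _ ≤ t ^ 2 / 2 * ∑ k : Fin n, ∫ u, (f u - wK μ k f u) ^ 2
          * Real.exp (t * f u) ∂piM μ n := hsum2
    _ ≤ t ^ 2 / 2 * (a * ∫ x, f x * Real.exp (t * f x) ∂piM μ n) :=
        mul_le_mul_of_nonneg_left hfinal ht2
    _ = a * t ^ 2 / 2 * ∫ x, f x * Real.exp (t * f x) ∂piM μ n := by ring

end SelfBound


/-! ### Herbst argument -/

section Herbst

variable {Ω : Type*} [MeasurableSpace Ω] {P : Measure Ω} [IsProbabilityMeasure P]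
variable {f : Ω → ℝ}

lemma exp_int_of_le (hf : Measurable f) (hnn : ∀ x, 0 ≤ f x) {lam : ℝ}
    (hint : Integrable (fun x => Real.exp (lam * f x)) P) {t : ℝ} (ht0 : 0 ≤ t)
    (htlam : t ≤ lam) : Integrable (fun x => Real.exp (t * f x)) P := by
  apply Integrable.mono' hint (Real.measurable_exp.comp (hf.const_mul t)).aestronglyMeasurable
  filter_upwards with x
  show ‖Real.exp (t * f x)‖ ≤ Real.exp (lam * f x)
  rw [Real.norm_eq_abs, abs_of_nonneg (Real.exp_pos _).le]
  exact Real.exp_le_exp.2 (mul_le_mul_of_nonneg_right htlam (hnn x))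

lemma fe_int_of_lt (hf : Measurable f) (hnn : ∀ x, 0 ≤ f x) {lam : ℝ}
    (hint : Integrable (fun x => Real.exp (lam * f x)) P) {t : ℝ} (ht0 : 0 ≤ t)
    (htlam : t < lam) : Integrable (fun x => f x * Real.exp (t * f x)) P := by
  set δ := lam - t with hδ
  have hδ0 : 0 < δ := by simp [hδ]; linarith
  apply Integrable.mono' (hint.const_mul (1/δ))
    ((hf.mul (Real.measurable_exp.comp (hf.const_mul t))).aestronglyMeasurable)
  filter_upwards with x
  show ‖f x * Real.exp (t * f x)‖ ≤ 1/δ * Real.exp (lam * f x)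
  rw [Real.norm_eq_abs, abs_of_nonneg (mul_nonneg (hnn x) (Real.exp_pos _).le)]
  have hkey := mul_exp_neg_le hδ0 (hnn x)
  have hsplit : Real.exp (t * f x) = Real.exp (-δ * f x) * Real.exp (lam * f x) := by
    rw [← Real.exp_add]; congr 1; rw [hδ]; ring
  calc f x * Real.exp (t * f x) = (f x * Real.exp (-δ * f x)) * Real.exp (lam * f x) := by
        rw [hsplit]; ring
    _ ≤ (1/δ) * Real.exp (lam * f x) :=
        mul_le_mul_of_nonneg_right hkey (Real.exp_pos _).le
    _ = 1/δ * Real.exp (lam * f x) := rfl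

lemma f2e_int_of_lt (hf : Measurable f) (hnn : ∀ x, 0 ≤ f x) {lam : ℝ}
    (hint : Integrable (fun x => Real.exp (lam * f x)) P) {t : ℝ} (ht0 : 0 ≤ t)
    (htlam : t < lam) : Integrable (fun x => f x ^ 2 * Real.exp (t * f x)) P := by
  set δ := lam - t with hδ
  have hδ0 : 0 < δ := by simp [hδ]; linarith
  apply Integrable.mono' (hint.const_mul (4/δ^2))
    (((hf.pow_const 2).mul (Real.measurable_exp.comp (hf.const_mul t))).aestronglyMeasurable)
  filter_upwards with x
  show ‖f x ^ 2 * Real.exp (t * f x)‖ ≤ 4/δ^2 * Real.exp (lam * f x)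
  rw [Real.norm_eq_abs, abs_of_nonneg (mul_nonneg (sq_nonneg _) (Real.exp_pos _).le)]
  have hkey := sq_mul_exp_neg_le hδ0 (hnn x)
  have hsplit : Real.exp (t * f x) = Real.exp (-δ * f x) * Real.exp (lam * f x) := by
    rw [← Real.exp_add]; congr 1; rw [hδ]; ring
  calc f x ^ 2 * Real.exp (t * f x) = (f x ^ 2 * Real.exp (-δ * f x)) * Real.exp (lam * f x) := by
        rw [hsplit]; ring
    _ ≤ (4/δ^2) * Real.exp (lam * f x) :=
        mul_le_mul_of_nonneg_right hkey (Real.exp_pos _).le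

lemma f_int_of_exp (hf : Measurable f) (hnn : ∀ x, 0 ≤ f x) {lam : ℝ} (hlam : 0 < lam)
    (hint : Integrable (fun x => Real.exp (lam * f x)) P) : Integrable f P := by
  apply Integrable.mono' (hint.const_mul (1/lam)) hf.aestronglyMeasurable
  filter_upwards with x
  show ‖f x‖ ≤ 1/lam * Real.exp (lam * f x)
  rw [Real.norm_eq_abs, abs_of_nonneg (hnn x)]
  have h1 : lam * f x ≤ Real.exp (lam * f x) := by
    have := Real.add_one_le_exp (lam * f x); linarith
  rw [div_mul_eq_mul_div, one_mul, le_div_iff₀ hlam]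
  linarith [h1]

lemma herbst (hf : Measurable f) (hnn : ∀ x, 0 ≤ f x) {a lam : ℝ} (ha : 0 < a)
    (hlam0 : 0 < lam) (hlam1 : lam < 2 / a)
    (hint : Integrable (fun x => Real.exp (lam * f x)) P)
    (hEnt : ∀ t : ℝ, 0 < t → t < lam →
      ent P (fun x => Real.exp (t * f x)) ≤ a * t ^ 2 / 2 * ∫ x, f x * Real.exp (t * f x) ∂P) :
    Real.log (∫ x, Real.exp (lam * f x) ∂P)
      ≤ 2 * lam * (∫ x, f x ∂P) / (2 - a * lam) := by
  have halam : a * lam < 2 := by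
    have h1 := (lt_div_iff₀ ha).1 hlam1
    linarith [h1, mul_comm a lam]
  set m := ∫ x, f x ∂P with hmdef
  have hm0 : 0 ≤ m := integral_nonneg hnn
  have hf_int : Integrable f P := f_int_of_exp hf hnn hlam0 hint
  set F := fun t : ℝ => ∫ x, Real.exp (t * f x) ∂P with hFdef
  set D := fun t : ℝ => ∫ x, f x * Real.exp (t * f x) ∂P with hDdef
  have hF1 : ∀ t : ℝ, 0 ≤ t → t ≤ lam → 1 ≤ F t := by
    intro t ht0 htlam
    apply one_le_integral _ (exp_int_of_le hf hnn hint ht0 htlam)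
    filter_upwards with x
    rw [← Real.exp_zero]
    exact Real.exp_le_exp.2 (mul_nonneg ht0 (hnn x))
  have hFpos : ∀ t : ℝ, 0 ≤ t → t ≤ lam → 0 < F t :=
    fun t h1 h2 => lt_of_lt_of_le one_pos (hF1 t h1 h2)
  -- derivative of F
  have hderiv : ∀ t ∈ Ioo (0:ℝ) lam, HasDerivAt F (D t) t := by
    intro t₀ ht₀
    set ε := (lam - t₀)/2 with hε
    have hε0 : 0 < ε := by rw [hε]; linarith [ht₀.2]
    have htε : t₀ + ε < lam := by rw [hε]; linarith [ht₀.2]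
    have hbound : ∀ᵐ x ∂P, ∀ t ∈ Metric.ball t₀ ε,
        ‖f x * Real.exp (t * f x)‖ ≤ f x * Real.exp ((t₀ + ε) * f x) := by
      filter_upwards with x t htball
      rw [Real.norm_eq_abs, abs_of_nonneg (mul_nonneg (hnn x) (Real.exp_pos _).le)]
      apply mul_le_mul_of_nonneg_left _ (hnn x)
      apply Real.exp_le_exp.2
      apply mul_le_mul_of_nonneg_right _ (hnn x)
      rw [Metric.mem_ball, Real.dist_eq] at htball
      have habs := abs_lt.1 htball
      linarith [habs.2]
    have hdiff : ∀ᵐ x ∂P, ∀ t ∈ Metric.ball t₀ ε,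
        HasDerivAt (fun t => Real.exp (t * f x)) (f x * Real.exp (t * f x)) t := by
      filter_upwards with x t _
      have h1 : HasDerivAt (fun t : ℝ => t * f x) (f x) t := by
        simpa using (hasDerivAt_id t).mul_const (f x)
      have h2 := (Real.hasDerivAt_exp (t * f x)).comp t h1
      simpa [mul_comm, Function.comp_def] using h2
    have hres := hasDerivAt_integral_of_dominated_loc_of_deriv_le (μ := P)
      (F := fun t x => Real.exp (t * f x)) (F' := fun t x => f x * Real.exp (t * f x))
      (x₀ := t₀) (bound := fun x => f x * Real.exp ((t₀ + ε) * f x)) (Metric.ball_mem_nhds t₀ hε0)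
      (Eventually.of_forall (fun t =>
        (Real.measurable_exp.comp (hf.const_mul t)).aestronglyMeasurable))
      (exp_int_of_le hf hnn hint ht₀.1.le (le_of_lt ht₀.2))
      ((hf.mul (Real.measurable_exp.comp (hf.const_mul t₀))).aestronglyMeasurable)
      hbound (fe_int_of_lt hf hnn hint (by linarith [ht₀.1, hε0]) htε) hdiff
    exact hres.2
  -- differential inequality
  have htD : ∀ t ∈ Ioo (0:ℝ) lam, t * D t - F t * Real.log (F t) ≤ a * t ^ 2 / 2 * D t := by
    intro t ht
    have h := hEnt t ht.1 ht.2
    have hform : ent P (fun x => Real.exp (t * f x)) = t * D t - F t * Real.log (F t) := by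
      unfold ent
      have hfun : (fun x => Real.exp (t * f x) * Real.log (Real.exp (t * f x)))
          = fun x => t * (f x * Real.exp (t * f x)) := by
        funext x; rw [Real.log_exp]; ring
      rw [hfun, integral_const_mul]
    rw [hform] at h
    exact h
  -- φ is antitone on Ioo 0 lam
  have hφderiv : ∀ t ∈ Ioo (0:ℝ) lam, HasDerivAt
      (fun t => Real.log (F t) / t - a/2 * Real.log (F t))
      ((D t / F t) * t⁻¹ + Real.log (F t) * (-(t^2)⁻¹) - a/2 * (D t / F t)) t := by
    intro t ht
    have hFne : F t ≠ 0 := ne_of_gt (hFpos t ht.1.le ht.2.le)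
    have hG : HasDerivAt (fun t => Real.log (F t)) (D t / F t) t := (hderiv t ht).log hFne
    have hinv : HasDerivAt (fun t : ℝ => t⁻¹) (-(t^2)⁻¹) t := hasDerivAt_inv (ne_of_gt ht.1)
    have hprod := hG.fun_mul hinv
    have hconst := hG.const_mul (a/2)
    have := hprod.fun_sub hconst
    simpa [div_eq_mul_inv] using this
  have hφmono : AntitoneOn (fun t => Real.log (F t) / t - a/2 * Real.log (F t))
      (Ioo (0:ℝ) lam) := by
    apply antitoneOn_of_deriv_nonpos (convex_Ioo 0 lam)
    · apply DifferentiableOn.continuousOn (𝕜 := ℝ)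
      intro t ht
      exact (hφderiv t ht).differentiableAt.differentiableWithinAt
    · intro t ht
      rw [interior_Ioo] at ht
      exact (hφderiv t ht).differentiableAt.differentiableWithinAt
    · intro t ht
      rw [interior_Ioo] at ht
      rw [(hφderiv t ht).deriv]
      have hFp := hFpos t ht.1.le ht.2.le
      have htne : t ≠ 0 := ne_of_gt ht.1
      have hFne : F t ≠ 0 := ne_of_gt hFp
      have heq : (D t / F t) * t⁻¹ + Real.log (F t) * (-(t^2)⁻¹) - a/2 * (D t / F t)
          = (t * D t - F t * Real.log (F t) - a * t ^ 2 / 2 * D t) / (t^2 * F t) := by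
        field_simp
        ring
      rw [heq]
      apply div_nonpos_of_nonpos_of_nonneg
      · linarith [htD t ht]
      · positivity
  -- φ t ≤ m on Ioo
  have hφle : ∀ t ∈ Ioo (0:ℝ) lam, Real.log (F t) / t - a/2 * Real.log (F t) ≤ m := by
    intro t ht
    set s : ℕ → ℝ := fun j => t / (j + 2) with hsdef
    have hs_pos : ∀ j, 0 < s j := by
      intro j
      apply div_pos ht.1
      positivity
    have hs_lt : ∀ j, s j < t := by
      intro j
      rw [hsdef]
      simp only
      rw [div_lt_iff₀ (by positivity)]
      nlinarith [ht.1]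
    have hs_mem : ∀ j, s j ∈ Ioo (0:ℝ) lam := fun j => ⟨hs_pos j, lt_trans (hs_lt j) ht.2⟩
    have hs_tendsto : Tendsto s atTop (𝓝 0) := by
      apply Tendsto.div_atTop (tendsto_const_nhds)
      apply tendsto_atTop_add_const_right
      exact tendsto_natCast_atTop_atTop
    -- D (s j) tendsto m
    have hD_tendsto : Tendsto (fun j => D (s j)) atTop (𝓝 m) := by
      apply tendsto_integral_of_dominated_convergence (fun x => f x * Real.exp (t * f x))
      · intro j
        exact (hf.mul (Real.measurable_exp.comp (hf.const_mul (s j)))).aestronglyMeasurable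
      · exact fe_int_of_lt hf hnn hint ht.1.le ht.2
      · intro j
        filter_upwards with x
        rw [Real.norm_eq_abs, abs_of_nonneg (mul_nonneg (hnn x) (Real.exp_pos _).le)]
        apply mul_le_mul_of_nonneg_left _ (hnn x)
        exact Real.exp_le_exp.2 (mul_le_mul_of_nonneg_right (hs_lt j).le (hnn x))
      · filter_upwards with x
        have h1 : Tendsto (fun j => s j * f x) atTop (𝓝 0) := by
          simpa using hs_tendsto.mul_const (f x)
        have h2 : Tendsto (fun j => Real.exp (s j * f x)) atTop (𝓝 1) := by
          have := (Real.continuous_exp.continuousAt (x := (0:ℝ))).tendsto.comp h1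
          simpa [Function.comp_def] using this
        have h3 := Tendsto.mul
          (tendsto_const_nhds : Tendsto (fun _ : ℕ => f x) atTop (𝓝 (f x))) h2
        simpa using h3
    -- φ t ≤ D (s j)
    have hφleD : ∀ j, Real.log (F t) / t - a/2 * Real.log (F t) ≤ D (s j) := by
      intro j
      have h1 := hφmono (hs_mem j) ht (hs_lt j).le
      have hG0 : 0 ≤ Real.log (F (s j)) := Real.log_nonneg (hF1 (s j) (hs_pos j).le
        (le_of_lt (hs_mem j).2))
      have hGub : Real.log (F (s j)) ≤ s j * D (s j) := by
        have hstep1 : Real.log (F (s j)) ≤ F (s j) - 1 :=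
          Real.log_le_sub_one_of_pos (hFpos (s j) (hs_pos j).le (le_of_lt (hs_mem j).2))
        have hstep2 : F (s j) - 1 ≤ s j * D (s j) := by
          have hpt : ∀ᵐ x ∂P, Real.exp (s j * f x) - 1 ≤ s j * (f x * Real.exp (s j * f x)) := by
            filter_upwards with x
            have := exp_sub_one_le (mul_nonneg (hs_pos j).le (hnn x))
            calc Real.exp (s j * f x) - 1 ≤ (s j * f x) * Real.exp (s j * f x) := this
              _ = s j * (f x * Real.exp (s j * f x)) := by ring
          have hi1 : Integrable (fun x => Real.exp (s j * f x) - 1) P :=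
            (exp_int_of_le hf hnn hint (hs_pos j).le (le_of_lt (hs_mem j).2)).sub
              (integrable_const 1)
          have hi2 : Integrable (fun x => s j * (f x * Real.exp (s j * f x))) P :=
            (fe_int_of_lt hf hnn hint (hs_pos j).le (hs_mem j).2).const_mul _
          have := integral_mono_ae hi1 hi2 hpt
          rw [integral_sub (exp_int_of_le hf hnn hint (hs_pos j).le (le_of_lt (hs_mem j).2))
            (integrable_const 1), integral_const, integral_const_mul] at this
          simp only [measure_univ, probReal_univ, ENNReal.toReal_one, smul_eq_mul, one_mul] at this
          exact this
        linarith
      have hdivD : Real.log (F (s j)) / s j ≤ D (s j) := by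
        rw [div_le_iff₀ (hs_pos j)]
        calc Real.log (F (s j)) ≤ s j * D (s j) := hGub
          _ = D (s j) * s j := by ring
      have haG : 0 ≤ a/2 * Real.log (F (s j)) :=
        mul_nonneg (by linarith) hG0
      calc Real.log (F t) / t - a/2 * Real.log (F t)
          ≤ Real.log (F (s j)) / s j - a/2 * Real.log (F (s j)) := h1
        _ ≤ Real.log (F (s j)) / s j := by linarith
        _ ≤ D (s j) := hdivD
    exact ge_of_tendsto hD_tendsto (Eventually.of_forall hφleD)
  -- G t ≤ 2 m t / (2 - a t) on Ioo
  have hGbound : ∀ t ∈ Ioo (0:ℝ) lam, Real.log (F t) ≤ 2 * m * t / (2 - a * t) := by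
    intro t ht
    have hφ := hφle t ht
    have hat : a * t < 2 := by
      have : a * t < a * lam := by
        apply mul_lt_mul_of_pos_left ht.2 ha
      linarith
    have hcoef : 0 < 1/t - a/2 := by
      rw [sub_pos, div_lt_div_iff₀ (by norm_num : (0:ℝ) < 2) ht.1]
      linarith
    have h1 : Real.log (F t) * (1/t - a/2) ≤ m := by
      have : Real.log (F t) / t - a/2 * Real.log (F t) = Real.log (F t) * (1/t - a/2) := by
        ring
      linarith [hφ, this.symm.le, this.le]
    have h2 : Real.log (F t) ≤ m / (1/t - a/2) := by
      rw [le_div_iff₀ hcoef]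
      exact h1
    have hne1 : t ≠ 0 := ne_of_gt ht.1
    have hne2 : (2:ℝ) - a * t ≠ 0 := ne_of_gt (by linarith)
    have hne3 : 1/t - a/2 ≠ 0 := ne_of_gt hcoef
    have h3 : m / (1/t - a/2) = 2 * m * t / (2 - a * t) := by
      rw [div_eq_div_iff hne3 hne2]
      field_simp
    linarith [h2, h3.le, h3.symm.le]
  -- pass to the limit t → lam
  have hlimit : Real.log (F lam) ≤ 2 * m * lam / (2 - a * lam) := by
    set tj : ℕ → ℝ := fun j => lam - lam / (j + 2) with htjdef
    have htj_pos : ∀ j, 0 < tj j := by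
      intro j
      rw [htjdef]
      simp only
      have h1 : lam / (j + 2) < lam := by
        rw [div_lt_iff₀ (by positivity)]
        nlinarith
      linarith
    have htj_lt : ∀ j, tj j < lam := by
      intro j
      rw [htjdef]
      simp only
      have : 0 < lam / ((j:ℝ) + 2) := by positivity
      linarith
    have htj_mem : ∀ j, tj j ∈ Ioo (0:ℝ) lam := fun j => ⟨htj_pos j, htj_lt j⟩
    have htj_mono : Monotone tj := by
      intro i j hij
      rw [htjdef]
      simp only
      have hcast : ((i:ℝ) + 2) ≤ ((j:ℝ) + 2) := by
        have := (Nat.cast_le (α := ℝ)).2 hij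
        linarith
      have h1 : lam / ((j:ℝ) + 2) ≤ lam / ((i:ℝ) + 2) :=
        div_le_div_of_nonneg_left hlam0.le (by positivity) hcast
      linarith
    have htj_tendsto : Tendsto tj atTop (𝓝 lam) := by
      have h1 : Tendsto (fun j : ℕ => lam / ((j:ℝ) + 2)) atTop (𝓝 0) := by
        apply Tendsto.div_atTop tendsto_const_nhds
        apply tendsto_atTop_add_const_right
        exact tendsto_natCast_atTop_atTop
      have h2 := Tendsto.sub
        (tendsto_const_nhds : Tendsto (fun _ : ℕ => lam) atTop (𝓝 lam)) h1
      simpa using h2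
    have hF_tendsto : Tendsto (fun j => F (tj j)) atTop (𝓝 (F lam)) := by
      apply integral_tendsto_of_tendsto_of_monotone
      · intro j
        exact exp_int_of_le hf hnn hint (htj_pos j).le (htj_lt j).le
      · exact hint
      · filter_upwards with x
        intro i j hij
        apply Real.exp_le_exp.2
        exact mul_le_mul_of_nonneg_right (htj_mono hij) (hnn x)
      · filter_upwards with x
        have h1 : Tendsto (fun j => tj j * f x) atTop (𝓝 (lam * f x)) :=
          htj_tendsto.mul_const (f x)
        exact (Real.continuous_exp.continuousAt.tendsto).comp h1
    have hG_tendsto : Tendsto (fun j => Real.log (F (tj j))) atTop (𝓝 (Real.log (F lam))) := by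
      have hc := Real.continuousAt_log (ne_of_gt (hFpos lam hlam0.le le_rfl))
      exact hc.tendsto.comp hF_tendsto
    have hrhs_tendsto : Tendsto (fun j => 2 * m * tj j / (2 - a * tj j)) atTop
        (𝓝 (2 * m * lam / (2 - a * lam))) := by
      apply Tendsto.div
      · exact Tendsto.mul
          (tendsto_const_nhds : Tendsto (fun _ : ℕ => 2*m) atTop (𝓝 (2*m))) htj_tendsto
      · exact Tendsto.sub
          (tendsto_const_nhds : Tendsto (fun _ : ℕ => (2:ℝ)) atTop (𝓝 2))
          (Tendsto.mul (tendsto_const_nhds : Tendsto (fun _ : ℕ => a) atTop (𝓝 a)) htj_tendsto)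
      · exact ne_of_gt (by linarith)
    exact le_of_tendsto_of_tendsto' hG_tendsto hrhs_tendsto
      (fun j => hGbound (tj j) (htj_mem j))
  have hgoal : Real.log (F lam) ≤ 2 * lam * m / (2 - a * lam) := by
    rw [show 2 * lam * m / (2 - a * lam) = 2 * m * lam / (2 - a * lam) by ring]
    exact hlimit
  exact hgoal

end Herbst

end SBaux


/-- Self-bounding concentration: if `Σ_k (f(x) − inf_y f(S_y^k x))² ≤ a·f(x)` for all `x`,
then for `λ ∈ (0, 2/a)`, `ln E[exp(λ(f(X) − E[f(X')]))] ≤ λ²a·E[f(X)]/(2 − aλ)`. -/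
theorem stmt_18 {𝒳 : Type*} [MeasurableSpace 𝒳] (μ : Measure 𝒳) [IsProbabilityMeasure μ]
    (n : ℕ) (f : (Fin n → 𝒳) → ℝ) (hf : Measurable f) (hnn : ∀ x, 0 ≤ f x)
    (a : ℝ) (ha : 0 < a)
    (hsb : ∀ x : Fin n → 𝒳,
      ∑ k : Fin n, (f x - ⨅ y : 𝒳, f (Function.update x k y)) ^ 2 ≤ a * f x)
    (lam : ℝ) (hlam0 : 0 < lam) (hlam1 : lam < 2 / a) :
    Real.log (∫ x, Real.exp (lam * (f x
          - ∫ x', f x' ∂(Measure.pi fun _ : Fin n => μ)))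
        ∂(Measure.pi fun _ : Fin n => μ))
      ≤ lam ^ 2 * a * (∫ x, f x ∂(Measure.pi fun _ : Fin n => μ)) / (2 - a * lam) := by
  have h2alam : 0 < 2 - a * lam := by
    have h1 := (lt_div_iff₀ ha).1 hlam1
    linarith [h1, mul_comm a lam]
  set m := ∫ x', f x' ∂(Measure.pi fun _ : Fin n => μ) with hmdef
  have hm_eq : m = ∫ x, f x ∂(Measure.pi fun _ : Fin n => μ) := rfl
  have hm0 : 0 ≤ m := by rw [hmdef]; exact integral_nonneg hnn
  by_cases hI : Integrable (fun x => Real.exp (lam * f x)) (Measure.pi fun _ : Fin n => μ)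
  · -- integrable case
    have hEnt : ∀ t : ℝ, 0 < t → t < lam →
        SBaux.ent (Measure.pi fun _ : Fin n => μ) (fun x => Real.exp (t * f x))
          ≤ a * t ^ 2 / 2 * ∫ x, f x * Real.exp (t * f x)
              ∂(Measure.pi fun _ : Fin n => μ) := by
      intro t ht htlam
      exact SBaux.ent_exp_bound μ hf hnn hsb ht
        (SBaux.exp_int_of_le hf hnn hI ht.le htlam.le)
        (SBaux.fe_int_of_lt hf hnn hI ht.le htlam)
        (SBaux.f2e_int_of_lt hf hnn hI ht.le htlam)
    have hherb := SBaux.herbst hf hnn ha hlam0 hlam1 hI hEnt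
    have hsplit : (fun x => Real.exp (lam * (f x - m)))
        = fun x => Real.exp (-(lam * m)) * Real.exp (lam * f x) := by
      funext x
      rw [← Real.exp_add]
      congr 1
      ring
    have hFpos : 0 < ∫ x, Real.exp (lam * f x) ∂(Measure.pi fun _ : Fin n => μ) := by
      apply lt_of_lt_of_le one_pos
      apply SBaux.one_le_integral _ hI
      filter_upwards with x
      rw [← Real.exp_zero]
      exact Real.exp_le_exp.2 (mul_nonneg hlam0.le (hnn x))
    calc Real.log (∫ x, Real.exp (lam * (f x - m)) ∂(Measure.pi fun _ : Fin n => μ))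
        = Real.log (Real.exp (-(lam * m))
            * ∫ x, Real.exp (lam * f x) ∂(Measure.pi fun _ : Fin n => μ)) := by
          rw [hsplit, integral_const_mul]
      _ = -(lam * m) + Real.log (∫ x, Real.exp (lam * f x)
            ∂(Measure.pi fun _ : Fin n => μ)) := by
          rw [Real.log_mul (Real.exp_ne_zero _) (ne_of_gt hFpos), Real.log_exp]
      _ ≤ -(lam * m) + 2 * lam * m / (2 - a * lam) := by
          have := hherb
          rw [← hm_eq] at this
          linarith
      _ = lam ^ 2 * a * m / (2 - a * lam) := by
          rw [add_div' _ _ _ h2alam.ne']; congr 1; ring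
  · -- non-integrable case
    have hnot : ¬ Integrable (fun x => Real.exp (lam * (f x - m)))
        (Measure.pi fun _ : Fin n => μ) := by
      intro hcon
      apply hI
      have hc2 := hcon.const_mul (Real.exp (lam * m))
      apply hc2.congr
      filter_upwards with x
      rw [← Real.exp_add]
      congr 1
      ring
    rw [integral_undef hnot, Real.log_zero]
    apply div_nonneg
    · exact mul_nonneg (mul_nonneg (sq_nonneg lam) ha.le) (hm_eq ▸ hm0)
    · linarith
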